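/- arXiv:1105.5938 — 2 statements merged into one kernel-verified Lean document; each statement's English description precedes it below -/
import Mathlib

section
/- (Varberg's Theorem) Let f : [a,b] → ℝ be Riemann integrable on [a,b], and let G : [c,d] → ℝ be absolutely continuous on [c,d] with G([c,d]) ⊂ [a,b]. Suppose there exists a Riemann integrable function g : [c,d] → ℝ such that G'(t) = g(t) for almost every t ∈ [c,d]. Then the function t ↦ f(G(t)) g(t) is Riemann integrable on [c,d] and ∫_{G(c)}^{G(d)} f(x) dx = ∫_c^d f(G(t)) g(t) dt. -/
noncomputable section

/-- A partition of `[a, b]` given by points `x 0 = a < x 1 < ⋯ < x n = b`. -/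
def IsPartition (a b : ℝ) (n : ℕ) (x : ℕ → ℝ) : Prop :=
  x 0 = a ∧ x n = b ∧ ∀ i < n, x i < x (i + 1)

/-- The lower Darboux sum of `f` associated to the partition points `x 0, …, x n`. -/
noncomputable def lowerSum (f : ℝ → ℝ) (n : ℕ) (x : ℕ → ℝ) : ℝ :=
  ∑ i ∈ Finset.range n, sInf (f '' Set.Icc (x i) (x (i + 1))) * (x (i + 1) - x i)

/-- The upper Darboux sum of `f` associated to the partition points `x 0, …, x n`. -/
noncomputable def upperSum (f : ℝ → ℝ) (n : ℕ) (x : ℕ → ℝ) : ℝ :=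
  ∑ i ∈ Finset.range n, sSup (f '' Set.Icc (x i) (x (i + 1))) * (x (i + 1) - x i)

/-- The lower Darboux integral of `f` over `[a, b]`: the supremum of the lower sums. -/
noncomputable def lowerDarboux (f : ℝ → ℝ) (a b : ℝ) : ℝ :=
  sSup {s : ℝ | ∃ n x, IsPartition a b n x ∧ s = lowerSum f n x}

/-- The upper Darboux integral of `f` over `[a, b]`: the infimum of the upper sums. -/
noncomputable def upperDarboux (f : ℝ → ℝ) (a b : ℝ) : ℝ :=
  sInf {s : ℝ | ∃ n x, IsPartition a b n x ∧ s = upperSum f n x}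

/-- `f` is bounded on the set `s`. -/
def BoundedOn (f : ℝ → ℝ) (s : Set ℝ) : Prop := ∃ M : ℝ, ∀ x ∈ s, |f x| ≤ M

/-- `f` is Riemann integrable on `[a, b]`: it is bounded there and its lower and upper
Darboux integrals coincide. -/
def RiemannIntegrableOn (f : ℝ → ℝ) (a b : ℝ) : Prop :=
  BoundedOn f (Set.Icc a b) ∧ lowerDarboux f a b = upperDarboux f a b

/-- The oriented Riemann integral `∫_u^v f`: for `u ≤ v` it is the (lower) Darboux integral
over `[u, v]` (equal to the upper one when `f` is Riemann integrable, and `0` when `u = v`),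
and for `v < u` it is minus the integral over `[v, u]`. -/
noncomputable def riemannIntegral (f : ℝ → ℝ) (u v : ℝ) : ℝ :=
  if u ≤ v then lowerDarboux f u v else -lowerDarboux f v u

/-- `F` is absolutely continuous on `[a, b]`: for every `ε > 0` there is `δ > 0` such that
for every finite collection of non-overlapping subintervals `[u i, v i]` of `[a, b]` of total
length less than `δ`, the sum `∑ |F (v i) - F (u i)|` is less than `ε`. -/
def AbsolutelyContinuousOn (F : ℝ → ℝ) (a b : ℝ) : Prop :=
  ∀ ε > (0 : ℝ), ∃ δ > (0 : ℝ), ∀ n : ℕ, ∀ u v : ℕ → ℝ,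
    (∀ i < n, a ≤ u i ∧ u i ≤ v i ∧ v i ≤ b) →
    (∀ i < n, ∀ j < n, i ≠ j → Disjoint (Set.Ioo (u i) (v i)) (Set.Ioo (u j) (v j))) →
    (∑ i ∈ Finset.range n, (v i - u i)) < δ →
    (∑ i ∈ Finset.range n, |F (v i) - F (u i)|) < ε

namespace Varberg

open Set MeasureTheory

variable {u v : ℝ} {n : ℕ} {x c : ℕ → ℝ} {f : ℝ → ℝ}

lemma part_le (h : IsPartition u v n x) {i j : ℕ} (hij : i ≤ j) (hj : j ≤ n) :
    x i ≤ x j := by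
  induction j with
  | zero => simp_all
  | succ k ih =>
    rcases Nat.eq_or_lt_of_le hij with rfl | hlt
    · exact le_rfl
    · exact (ih (Nat.lt_succ_iff.mp hlt) (le_of_lt (Nat.lt_of_succ_le hj))).trans
        (le_of_lt (h.2.2 k (Nat.lt_of_succ_le hj)))

lemma part_uv (h : IsPartition u v n x) : u ≤ v := by
  have := part_le h (Nat.zero_le n) le_rfl
  rw [h.1, h.2.1] at this; exact this

lemma part_mem (h : IsPartition u v n x) {i : ℕ} (hi : i ≤ n) : x i ∈ Set.Icc u v := by
  constructor
  · have := part_le h (Nat.zero_le i) hi; rwa [h.1] at this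
  · have := part_le h hi le_rfl; rwa [h.2.1] at this

lemma part_icc_subset (h : IsPartition u v n x) {i : ℕ} (hi : i < n) :
    Set.Icc (x i) (x (i + 1)) ⊆ Set.Icc u v := fun t ht =>
  ⟨(part_mem h (le_of_lt hi)).1.trans ht.1, ht.2.trans (part_mem h hi).2⟩

lemma exists_idx_aux : ∀ (n : ℕ) (x : ℕ → ℝ), (∀ i < n, x i < x (i + 1)) → ∀ t : ℝ,
    x 0 ≤ t → t < x n → ∃ i < n, x i ≤ t ∧ t < x (i + 1) := by
  intro n
  induction n with
  | zero => intro x _ t h1 h2; exact absurd (h1.trans_lt h2) (lt_irrefl _)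
  | succ m ih =>
    intro x hx t h1 h2
    by_cases ht : t < x m
    · obtain ⟨i, hi, h⟩ := ih x (fun i hi => hx i (hi.trans (Nat.lt_succ_self m))) t h1 ht
      exact ⟨i, hi.trans (Nat.lt_succ_self m), h⟩
    · exact ⟨m, Nat.lt_succ_self m, not_lt.mp ht, h2⟩

lemma part_exists_idx (h : IsPartition u v n x) {t : ℝ} (ht : u ≤ t) (ht2 : t < v) :
    ∃ i < n, x i ≤ t ∧ t < x (i + 1) := by
  apply exists_idx_aux n x h.2.2 t
  · rw [h.1]; exact ht
  · rw [h.2.1]; exact ht2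

/-- The step function associated to partition points `x` and values `c`. -/
noncomputable def pstep (n : ℕ) (x c : ℕ → ℝ) : ℝ → ℝ := fun t =>
  ∑ i ∈ Finset.range n, (Set.Ico (x i) (x (i + 1))).indicator (fun _ => c i) t

lemma pstep_measurable : Measurable (pstep n x c) :=
  Finset.measurable_sum _ fun i _ => (measurable_const.indicator measurableSet_Ico)

lemma pstep_integrable : Integrable (pstep n x c) := by
  apply MeasureTheory.integrable_finset_sum
  intro i _
  rw [integrable_indicator_iff measurableSet_Ico]
  apply (integrableOn_const_iff).mpr
  right
  exact measure_Ico_lt_top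

lemma pstep_integral (h : IsPartition u v n x) :
    ∫ t, pstep n x c t = ∑ i ∈ Finset.range n, c i * (x (i + 1) - x i) := by
  simp only [pstep]
  rw [MeasureTheory.integral_finset_sum]
  · apply Finset.sum_congr rfl
    intro i hi
    rw [MeasureTheory.integral_indicator_const _ measurableSet_Ico]
    simp only [Real.volume_Ico, smul_eq_mul]
    rw [Real.volume_real_Ico_of_le (by linarith [le_of_lt (h.2.2 i (Finset.mem_range.mp hi))])]
    ring
  · intro i _
    rw [integrable_indicator_iff measurableSet_Ico]
    exact (integrableOn_const_iff).mpr (Or.inr measure_Ico_lt_top)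

lemma pstep_eq (h : IsPartition u v n x) {t : ℝ} {i : ℕ} (hi : i < n)
    (hti : t ∈ Set.Ico (x i) (x (i + 1))) : pstep n x c t = c i := by
  simp only [pstep]
  rw [Finset.sum_eq_single_of_mem i (Finset.mem_range.mpr hi)]
  · exact Set.indicator_of_mem hti _
  · intro j hj hji
    apply Set.indicator_of_notMem
    intro htj
    rcases lt_or_gt_of_ne hji with hlt | hgt
    · exact absurd htj.2 (not_lt.mpr ((part_le h (Nat.succ_le_of_lt hlt)
        (le_of_lt hi)).trans hti.1))
    · exact absurd hti.2 (not_lt.mpr ((part_le h (Nat.succ_le_of_lt hgt)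
        (le_of_lt (Finset.mem_range.mp hj))).trans htj.1))

lemma pstep_zero (h : IsPartition u v n x) {t : ℝ} (ht : t ∉ Set.Ico u v) :
    pstep n x c t = 0 := by
  simp only [pstep]
  apply Finset.sum_eq_zero
  intro i hi
  apply Set.indicator_of_notMem
  intro hti
  apply ht
  replace hi := Finset.mem_range.mp hi
  exact ⟨le_trans (by rw [← h.1]; exact part_le h (Nat.zero_le i) (le_of_lt hi)) hti.1,
    lt_of_lt_of_le hti.2 (by rw [← h.2.1]; exact part_le h hi le_rfl)⟩

end Varberg
namespace Varberg
open Set MeasureTheory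

variable {u v M : ℝ} {n m : ℕ} {x y : ℕ → ℝ} {f : ℝ → ℝ}

lemma bddBelow_im (hM : ∀ t ∈ Set.Icc u v, |f t| ≤ M) {p q : ℝ}
    (hsub : Set.Icc p q ⊆ Set.Icc u v) : BddBelow (f '' Set.Icc p q) := by
  refine ⟨-M, ?_⟩
  rintro y ⟨t, ht, rfl⟩
  have := abs_le.mp (hM t (hsub ht))
  linarith [this.1]

lemma bddAbove_im (hM : ∀ t ∈ Set.Icc u v, |f t| ≤ M) {p q : ℝ}
    (hsub : Set.Icc p q ⊆ Set.Icc u v) : BddAbove (f '' Set.Icc p q) := by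
  refine ⟨M, ?_⟩
  rintro y ⟨t, ht, rfl⟩
  exact le_of_abs_le (hM t (hsub ht))

lemma sInf_im_le (hM : ∀ t ∈ Set.Icc u v, |f t| ≤ M) {p q t : ℝ}
    (hsub : Set.Icc p q ⊆ Set.Icc u v) (ht : t ∈ Set.Icc p q) :
    sInf (f '' Set.Icc p q) ≤ f t :=
  csInf_le (bddBelow_im hM hsub) (Set.mem_image_of_mem f ht)

lemma le_sSup_im (hM : ∀ t ∈ Set.Icc u v, |f t| ≤ M) {p q t : ℝ}
    (hsub : Set.Icc p q ⊆ Set.Icc u v) (ht : t ∈ Set.Icc p q) :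
    f t ≤ sSup (f '' Set.Icc p q) :=
  le_csSup (bddAbove_im hM hsub) (Set.mem_image_of_mem f ht)

lemma abs_sInf_im_le (hM : ∀ t ∈ Set.Icc u v, |f t| ≤ M) {p q : ℝ} (hpq : p ≤ q)
    (hsub : Set.Icc p q ⊆ Set.Icc u v) : |sInf (f '' Set.Icc p q)| ≤ M := by
  have hne : (p : ℝ) ∈ Set.Icc p q := ⟨le_rfl, hpq⟩
  rw [abs_le]
  constructor
  · apply le_csInf (Set.Nonempty.image f ⟨p, hne⟩)
    rintro y ⟨t, ht, rfl⟩
    have := abs_le.mp (hM t (hsub ht)); linarith [this.1]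
  · exact (sInf_im_le hM hsub hne).trans (le_of_abs_le (hM p (hsub hne)))

lemma abs_sSup_im_le (hM : ∀ t ∈ Set.Icc u v, |f t| ≤ M) {p q : ℝ} (hpq : p ≤ q)
    (hsub : Set.Icc p q ⊆ Set.Icc u v) : |sSup (f '' Set.Icc p q)| ≤ M := by
  have hne : (p : ℝ) ∈ Set.Icc p q := ⟨le_rfl, hpq⟩
  rw [abs_le]
  constructor
  · have := abs_le.mp (hM p (hsub hne))
    linarith [le_sSup_im hM hsub hne]
  · apply csSup_le (Set.Nonempty.image f ⟨p, hne⟩)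
    rintro y ⟨t, ht, rfl⟩
    exact le_of_abs_le (hM t (hsub ht))

/-- The lower step function of `f` for a partition. -/
noncomputable def lstep (f : ℝ → ℝ) (n : ℕ) (x : ℕ → ℝ) : ℝ → ℝ :=
  pstep n x (fun i => sInf (f '' Set.Icc (x i) (x (i + 1))))

/-- The upper step function of `f` for a partition. -/
noncomputable def ustep (f : ℝ → ℝ) (n : ℕ) (x : ℕ → ℝ) : ℝ → ℝ :=
  pstep n x (fun i => sSup (f '' Set.Icc (x i) (x (i + 1))))

lemma lstep_integral (h : IsPartition u v n x) : ∫ t, lstep f n x t = lowerSum f n x :=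
  pstep_integral h

lemma ustep_integral (h : IsPartition u v n x) : ∫ t, ustep f n x t = upperSum f n x :=
  pstep_integral h

lemma lstep_le (hM : ∀ t ∈ Set.Icc u v, |f t| ≤ M) (h : IsPartition u v n x) {t : ℝ}
    (ht : t ∈ Set.Ico u v) : lstep f n x t ≤ f t := by
  obtain ⟨i, hi, h1, h2⟩ := part_exists_idx h ht.1 ht.2
  rw [lstep, pstep_eq h hi ⟨h1, h2⟩]
  exact sInf_im_le hM (part_icc_subset h hi) ⟨h1, le_of_lt h2⟩

lemma le_ustep (hM : ∀ t ∈ Set.Icc u v, |f t| ≤ M) (h : IsPartition u v n x) {t : ℝ}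
    (ht : t ∈ Set.Ico u v) : f t ≤ ustep f n x t := by
  obtain ⟨i, hi, h1, h2⟩ := part_exists_idx h ht.1 ht.2
  rw [ustep, pstep_eq h hi ⟨h1, h2⟩]
  exact le_sSup_im hM (part_icc_subset h hi) ⟨h1, le_of_lt h2⟩

/-- The bridge: any lower sum is at most any upper sum. -/
lemma lowerSum_le_upperSum (hM : ∀ t ∈ Set.Icc u v, |f t| ≤ M)
    (hP : IsPartition u v n x) (hQ : IsPartition u v m y) :
    lowerSum f n x ≤ upperSum f m y := by
  rw [← lstep_integral hP, ← ustep_integral hQ]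
  apply MeasureTheory.integral_mono pstep_integrable pstep_integrable
  intro t
  by_cases ht : t ∈ Set.Ico u v
  · exact (lstep_le hM hP ht).trans (le_ustep hM hQ ht)
  · simp only [lstep, ustep]
    rw [pstep_zero hP ht, pstep_zero hQ ht]

/-- A trivial partition always exists when `u ≤ v`. -/
lemma exists_partition (huv : u ≤ v) : ∃ n x, IsPartition u v n x := by
  rcases eq_or_lt_of_le huv with rfl | h
  · exact ⟨0, fun _ => u, rfl, rfl, fun i hi => absurd hi (Nat.not_lt_zero i)⟩
  · exact ⟨1, fun i => if i = 0 then u else v, by simp, by simp, by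
      intro i hi
      interval_cases i
      simp [h]⟩

lemma lowerDarboux_nonempty (huv : u ≤ v) :
    {s : ℝ | ∃ n x, IsPartition u v n x ∧ s = lowerSum f n x}.Nonempty := by
  obtain ⟨n, x, h⟩ := exists_partition huv
  exact ⟨lowerSum f n x, n, x, h, rfl⟩

lemma upperDarboux_nonempty (huv : u ≤ v) :
    {s : ℝ | ∃ n x, IsPartition u v n x ∧ s = upperSum f n x}.Nonempty := by
  obtain ⟨n, x, h⟩ := exists_partition huv
  exact ⟨upperSum f n x, n, x, h, rfl⟩

lemma lowerDarboux_bddAbove (hM : ∀ t ∈ Set.Icc u v, |f t| ≤ M) (huv : u ≤ v) :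
    BddAbove {s : ℝ | ∃ n x, IsPartition u v n x ∧ s = lowerSum f n x} := by
  obtain ⟨m, y, hQ⟩ := exists_partition huv
  refine ⟨upperSum f m y, ?_⟩
  rintro s ⟨n, x, hP, rfl⟩
  exact lowerSum_le_upperSum hM hP hQ

lemma upperDarboux_bddBelow (hM : ∀ t ∈ Set.Icc u v, |f t| ≤ M) (huv : u ≤ v) :
    BddBelow {s : ℝ | ∃ n x, IsPartition u v n x ∧ s = upperSum f n x} := by
  obtain ⟨m, y, hQ⟩ := exists_partition huv
  refine ⟨lowerSum f m y, ?_⟩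
  rintro s ⟨n, x, hP, rfl⟩
  exact lowerSum_le_upperSum hM hQ hP

lemma lowerDarboux_le_upperDarboux (hM : ∀ t ∈ Set.Icc u v, |f t| ≤ M) (huv : u ≤ v) :
    lowerDarboux f u v ≤ upperDarboux f u v := by
  apply csSup_le (lowerDarboux_nonempty huv)
  rintro s ⟨n, x, hP, rfl⟩
  apply le_csInf (upperDarboux_nonempty huv)
  rintro s' ⟨m, y, hQ, rfl⟩
  exact lowerSum_le_upperSum hM hP hQ

lemma partition_self {n : ℕ} {x : ℕ → ℝ} (h : IsPartition v v n x) : n = 0 := by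
  by_contra hn
  have h1 : x 0 < x n := by
    calc x 0 < x 1 := h.2.2 0 (Nat.pos_of_ne_zero hn)
    _ ≤ x n := part_le h (Nat.one_le_iff_ne_zero.mpr hn) le_rfl
  rw [h.1, h.2.1] at h1
  exact lt_irrefl v h1

lemma lowerDarboux_self : lowerDarboux f v v = 0 := by
  have : {s : ℝ | ∃ n x, IsPartition v v n x ∧ s = lowerSum f n x} = {0} := by
    ext s
    simp only [Set.mem_setOf_eq, Set.mem_singleton_iff]
    constructor
    · rintro ⟨n, x, hP, rfl⟩
      rw [partition_self hP, lowerSum, Finset.range_zero, Finset.sum_empty]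
    · rintro rfl
      exact ⟨0, fun _ => v, ⟨rfl, rfl, fun i hi => absurd hi (Nat.not_lt_zero i)⟩,
        by rw [lowerSum, Finset.range_zero, Finset.sum_empty]⟩
  rw [lowerDarboux, this, csSup_singleton]

lemma upperDarboux_self : upperDarboux f v v = 0 := by
  have : {s : ℝ | ∃ n x, IsPartition v v n x ∧ s = upperSum f n x} = {0} := by
    ext s
    simp only [Set.mem_setOf_eq, Set.mem_singleton_iff]
    constructor
    · rintro ⟨n, x, hP, rfl⟩
      rw [partition_self hP, upperSum, Finset.range_zero, Finset.sum_empty]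
    · rintro rfl
      exact ⟨0, fun _ => v, ⟨rfl, rfl, fun i hi => absurd hi (Nat.not_lt_zero i)⟩,
        by rw [upperSum, Finset.range_zero, Finset.sum_empty]⟩
  rw [upperDarboux, this, csInf_singleton]

/-- Uniform partition. -/
noncomputable def unif (u v : ℝ) (N : ℕ) : ℕ → ℝ := fun i => u + i * ((v - u) / N)

lemma unif_isPartition (huv : u < v) {N : ℕ} (hN : 0 < N) : IsPartition u v N (unif u v N) := by
  refine ⟨by simp [unif], ?_, ?_⟩
  · have : (N : ℝ) ≠ 0 := Nat.cast_ne_zero.mpr (Nat.pos_iff_ne_zero.mp hN)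
    simp only [unif]
    field_simp
    ring
  · intro i _
    have h1 : (0 : ℝ) < (v - u) / N := div_pos (by linarith) (Nat.cast_pos.mpr hN)
    simp only [unif, Nat.cast_add, Nat.cast_one]
    nlinarith

lemma unif_mesh {N : ℕ} (i : ℕ) : unif u v N (i + 1) - unif u v N i = (v - u) / N := by
  simp only [unif, Nat.cast_add, Nat.cast_one]
  ring

end Varberg
namespace Varberg
open Set MeasureTheory Filter Topology

variable {u v M : ℝ} {f : ℝ → ℝ}

lemma lstep_tendsto (huv : u < v) (hM : ∀ t ∈ Set.Icc u v, |f t| ≤ M) {t : ℝ}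
    (ht : t ∈ Set.Ioo u v) (hct : ContinuousWithinAt f (Set.Icc u v) t) :
    Tendsto (fun N : ℕ => lstep f (N + 1) (unif u v (N + 1)) t) atTop (𝓝 (f t)) := by
  rw [Metric.tendsto_atTop]
  intro ε hε
  obtain ⟨δ, hδ, hδ2⟩ := Metric.continuousWithinAt_iff.mp hct (ε / 2) (by linarith)
  obtain ⟨N₀, hN₀⟩ := exists_nat_gt ((v - u) / δ)
  refine ⟨N₀, fun N hN => ?_⟩
  have hP : IsPartition u v (N + 1) (unif u v (N + 1)) := unif_isPartition huv (Nat.succ_pos N)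
  have hmesh : (v - u) / (N + 1 : ℕ) < δ := by
    rw [div_lt_iff₀ (by positivity)]
    have h1 : (v - u) / δ < (N : ℝ) + 1 := hN₀.trans_le (by exact_mod_cast Nat.le_succ_of_le hN)
    rw [div_lt_iff₀ hδ] at h1
    push_cast
    nlinarith
  obtain ⟨i, hi, h1, h2⟩ := part_exists_idx hP (le_of_lt ht.1) ht.2
  have heq : lstep f (N + 1) (unif u v (N + 1)) t = sInf (f '' Set.Icc (unif u v (N + 1) i)
      (unif u v (N + 1) (i + 1))) := pstep_eq hP hi ⟨h1, h2⟩
  have hsub := part_icc_subset hP hi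
  have hclose : ∀ s ∈ Set.Icc (unif u v (N + 1) i) (unif u v (N + 1) (i + 1)),
      dist s t < δ := by
    intro s hs
    have hm := unif_mesh (u := u) (v := v) (N := N + 1) i
    rw [Real.dist_eq, abs_lt]
    push_cast at hm hmesh
    constructor <;> nlinarith [hs.1, hs.2]
  have hlb : f t - ε / 2 ≤ sInf (f '' Set.Icc (unif u v (N + 1) i) (unif u v (N + 1) (i + 1))) := by
    apply le_csInf ((Set.nonempty_Icc.mpr (le_of_lt (hP.2.2 i hi))).image f)
    rintro y ⟨s, hs, rfl⟩
    have := hδ2 (hsub hs) (hclose s hs)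
    rw [Real.dist_eq, abs_lt] at this
    linarith
  have hub := sInf_im_le hM hsub ⟨h1, le_of_lt h2⟩
  rw [Real.dist_eq, heq, abs_lt]
  constructor <;> linarith

lemma ustep_tendsto (huv : u < v) (hM : ∀ t ∈ Set.Icc u v, |f t| ≤ M) {t : ℝ}
    (ht : t ∈ Set.Ioo u v) (hct : ContinuousWithinAt f (Set.Icc u v) t) :
    Tendsto (fun N : ℕ => ustep f (N + 1) (unif u v (N + 1)) t) atTop (𝓝 (f t)) := by
  rw [Metric.tendsto_atTop]
  intro ε hε
  obtain ⟨δ, hδ, hδ2⟩ := Metric.continuousWithinAt_iff.mp hct (ε / 2) (by linarith)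
  obtain ⟨N₀, hN₀⟩ := exists_nat_gt ((v - u) / δ)
  refine ⟨N₀, fun N hN => ?_⟩
  have hP : IsPartition u v (N + 1) (unif u v (N + 1)) := unif_isPartition huv (Nat.succ_pos N)
  have hmesh : (v - u) / (N + 1 : ℕ) < δ := by
    rw [div_lt_iff₀ (by positivity)]
    have h1 : (v - u) / δ < (N : ℝ) + 1 := hN₀.trans_le (by exact_mod_cast Nat.le_succ_of_le hN)
    rw [div_lt_iff₀ hδ] at h1
    push_cast
    nlinarith
  obtain ⟨i, hi, h1, h2⟩ := part_exists_idx hP (le_of_lt ht.1) ht.2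
  have heq : ustep f (N + 1) (unif u v (N + 1)) t = sSup (f '' Set.Icc (unif u v (N + 1) i)
      (unif u v (N + 1) (i + 1))) := pstep_eq hP hi ⟨h1, h2⟩
  have hsub := part_icc_subset hP hi
  have hclose : ∀ s ∈ Set.Icc (unif u v (N + 1) i) (unif u v (N + 1) (i + 1)),
      dist s t < δ := by
    intro s hs
    have hm := unif_mesh (u := u) (v := v) (N := N + 1) i
    rw [Real.dist_eq, abs_lt]
    push_cast at hm hmesh
    constructor <;> nlinarith [hs.1, hs.2]
  have hub : sSup (f '' Set.Icc (unif u v (N + 1) i) (unif u v (N + 1) (i + 1)))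
      ≤ f t + ε / 2 := by
    apply csSup_le ((Set.nonempty_Icc.mpr (le_of_lt (hP.2.2 i hi))).image f)
    rintro y ⟨s, hs, rfl⟩
    have := hδ2 (hsub hs) (hclose s hs)
    rw [Real.dist_eq, abs_lt] at this
    linarith
  have hlb := le_sSup_im hM hsub ⟨h1, le_of_lt h2⟩
  rw [Real.dist_eq, heq, abs_lt]
  constructor <;> linarith

/-- Main convergence lemma: bounded a.e.-continuous functions are Darboux integrable
with Darboux integrals equal to the Lebesgue integral. -/
lemma darboux_eq (huv : u ≤ v) (hM : ∀ t ∈ Set.Icc u v, |f t| ≤ M)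
    (hc : ∀ᵐ t ∂volume, t ∈ Set.Icc u v → ContinuousWithinAt f (Set.Icc u v) t) :
    IntegrableOn f (Set.Icc u v) ∧ lowerDarboux f u v = ∫ t in u..v, f t ∧
      upperDarboux f u v = ∫ t in u..v, f t := by
  rcases eq_or_lt_of_le huv with rfl | hlt
  · refine ⟨?_, ?_, ?_⟩
    · have h0 : volume.restrict (Set.Icc u u) = 0 := by
        rw [Measure.restrict_eq_zero]
        simp
      rw [IntegrableOn, h0]
      exact integrable_zero_measure
    · rw [intervalIntegral.integral_same, lowerDarboux_self]
    · rw [intervalIntegral.integral_same, upperDarboux_self]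
  have hM0 : 0 ≤ M := (abs_nonneg (f u)).trans (hM u ⟨le_rfl, huv⟩)
  set fLim : ℝ → ℝ := (Set.Ioo u v).indicator f with hfLim
  set sN : ℕ → ℝ → ℝ := fun N => lstep f (N + 1) (unif u v (N + 1)) with hsN
  set SN : ℕ → ℝ → ℝ := fun N => ustep f (N + 1) (unif u v (N + 1)) with hSN
  set bound : ℝ → ℝ := (Set.Icc u v).indicator (fun _ => M) with hbound
  have hPn : ∀ N : ℕ, IsPartition u v (N + 1) (unif u v (N + 1)) :=
    fun N => unif_isPartition hlt (Nat.succ_pos N)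
  -- a.e. convergence
  have hae : ∀ᵐ t ∂volume, Tendsto (fun N => sN N t) atTop (𝓝 (fLim t)) ∧
      Tendsto (fun N => SN N t) atTop (𝓝 (fLim t)) := by
    have h2 : ∀ᵐ t ∂volume, t ≠ u := by
      rw [MeasureTheory.ae_iff]
      simp only [not_not, Set.setOf_eq_eq_singleton]
      exact measure_singleton u
    have h3 : ∀ᵐ t ∂volume, t ≠ v := by
      rw [MeasureTheory.ae_iff]
      simp only [not_not, Set.setOf_eq_eq_singleton]
      exact measure_singleton v
    filter_upwards [hc, h2, h3] with t hct hu hv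
    by_cases ht : t ∈ Set.Ioo u v
    · have hcont := hct ⟨le_of_lt ht.1, le_of_lt ht.2⟩
      have : fLim t = f t := Set.indicator_of_mem ht _
      rw [this]
      exact ⟨lstep_tendsto hlt hM ht hcont, ustep_tendsto hlt hM ht hcont⟩
    · have htIco : t ∉ Set.Ico u v := by
        intro h
        exact ht ⟨lt_of_le_of_ne h.1 (Ne.symm hu), h.2⟩
      have : fLim t = 0 := Set.indicator_of_notMem ht _
      rw [this]
      constructor
      · have : ∀ N, sN N t = 0 := fun N => pstep_zero (hPn N) htIco
        simp only [this]
        exact tendsto_const_nhds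
      · have : ∀ N, SN N t = 0 := fun N => pstep_zero (hPn N) htIco
        simp only [this]
        exact tendsto_const_nhds
  -- bounds
  have hbdd : ∀ (N : ℕ) (t : ℝ), ‖sN N t‖ ≤ bound t ∧ ‖SN N t‖ ≤ bound t := by
    intro N t
    by_cases ht : t ∈ Set.Ico u v
    · obtain ⟨i, hi, h1, h2⟩ := part_exists_idx (hPn N) ht.1 ht.2
      have hb : bound t = M := Set.indicator_of_mem (Set.mem_Icc.mpr ⟨ht.1, le_of_lt ht.2⟩) (fun _ => M)
      constructor
      · rw [hsN]
        simp only [lstep]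
        rw [pstep_eq (hPn N) hi ⟨h1, h2⟩, hb, Real.norm_eq_abs]
        exact abs_sInf_im_le hM (le_of_lt ((hPn N).2.2 i hi)) (part_icc_subset (hPn N) hi)
      · rw [hSN]
        simp only [ustep]
        rw [pstep_eq (hPn N) hi ⟨h1, h2⟩, hb, Real.norm_eq_abs]
        exact abs_sSup_im_le hM (le_of_lt ((hPn N).2.2 i hi)) (part_icc_subset (hPn N) hi)
    · have hl : sN N t = 0 := pstep_zero (hPn N) ht
      have hu' : SN N t = 0 := pstep_zero (hPn N) ht
      rw [hl, hu', norm_zero]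
      have : 0 ≤ bound t := Set.indicator_nonneg (fun _ _ => hM0) t
      exact ⟨this, this⟩
  have hbound_int : Integrable bound := by
    rw [hbound, integrable_indicator_iff measurableSet_Icc]
    exact (integrableOn_const_iff).mpr (Or.inr measure_Icc_lt_top)
  -- integrability of fLim, hence of f on Icc u v
  have hmeasLim : AEStronglyMeasurable fLim volume :=
    aestronglyMeasurable_of_tendsto_ae atTop
      (fun N => (pstep_measurable (n := N + 1)).aestronglyMeasurable)
      (hae.mono fun t ht => ht.1)
  have hLim_int : Integrable fLim := by
    apply Integrable.mono' hbound_int hmeasLim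
    filter_upwards [hae] with t ht
    exact le_of_tendsto ht.1.norm (Filter.Eventually.of_forall fun N => (hbdd N t).1)
  have hIntOn : IntegrableOn f (Set.Icc u v) := by
    have h1 : IntegrableOn f (Set.Ioo u v) :=
      (integrable_indicator_iff measurableSet_Ioo).mp hLim_int
    exact h1.congr_set_ae (MeasureTheory.Ioo_ae_eq_Icc (μ := volume) (a := u) (b := v)).symm
  -- value of ∫ fLim
  have hval : ∫ t, fLim t = ∫ t in u..v, f t := by
    rw [hfLim, MeasureTheory.integral_indicator measurableSet_Ioo,
      intervalIntegral.integral_of_le huv, MeasureTheory.integral_Ioc_eq_integral_Ioo]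
  -- DCT for lower and upper sums
  have hDCTlow : Tendsto (fun N => lowerSum f (N + 1) (unif u v (N + 1))) atTop
      (𝓝 (∫ t in u..v, f t)) := by
    rw [← hval]
    have := MeasureTheory.tendsto_integral_of_dominated_convergence bound
      (fun N => (pstep_measurable (n := N + 1)).aestronglyMeasurable) hbound_int
      (fun N => Filter.Eventually.of_forall fun t => (hbdd N t).1)
      (hae.mono fun t ht => ht.1)
    convert this using 2 with N
    exact (lstep_integral (hPn N)).symm
  have hDCThigh : Tendsto (fun N => upperSum f (N + 1) (unif u v (N + 1))) atTop
      (𝓝 (∫ t in u..v, f t)) := by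
    rw [← hval]
    have := MeasureTheory.tendsto_integral_of_dominated_convergence bound
      (fun N => (pstep_measurable (n := N + 1)).aestronglyMeasurable) hbound_int
      (fun N => Filter.Eventually.of_forall fun t => (hbdd N t).2)
      (hae.mono fun t ht => ht.2)
    convert this using 2 with N
    exact (ustep_integral (hPn N)).symm
  -- each lower sum ≤ ∫ fLim, each upper sum ≥ ∫ fLim
  have hlow_le : ∀ (n : ℕ) (x : ℕ → ℝ), IsPartition u v n x →
      lowerSum f n x ≤ ∫ t in u..v, f t := by
    intro n x hP
    rw [← hval, ← lstep_integral hP]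
    apply MeasureTheory.integral_mono_ae pstep_integrable hLim_int
    have h2 : ∀ᵐ t ∂volume, t ≠ u := by
      rw [MeasureTheory.ae_iff]
      simp only [not_not, Set.setOf_eq_eq_singleton]
      exact measure_singleton u
    filter_upwards [h2] with t hu
    show lstep f n x t ≤ fLim t
    by_cases ht : t ∈ Set.Ioo u v
    · have : fLim t = f t := Set.indicator_of_mem ht _
      rw [this]
      exact lstep_le hM hP ⟨le_of_lt ht.1, ht.2⟩
    · have htIco : t ∉ Set.Ico u v := fun h =>
        ht ⟨lt_of_le_of_ne h.1 (Ne.symm hu), h.2⟩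
      have h0 : lstep f n x t = 0 := pstep_zero hP htIco
      have h1 : fLim t = 0 := Set.indicator_of_notMem ht _
      rw [h0, h1]
  have hhigh_ge : ∀ (n : ℕ) (x : ℕ → ℝ), IsPartition u v n x →
      (∫ t in u..v, f t) ≤ upperSum f n x := by
    intro n x hP
    rw [← hval, ← ustep_integral hP]
    apply MeasureTheory.integral_mono_ae hLim_int pstep_integrable
    have h2 : ∀ᵐ t ∂volume, t ≠ u := by
      rw [MeasureTheory.ae_iff]
      simp only [not_not, Set.setOf_eq_eq_singleton]
      exact measure_singleton u
    filter_upwards [h2] with t hu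
    show fLim t ≤ ustep f n x t
    by_cases ht : t ∈ Set.Ioo u v
    · have : fLim t = f t := Set.indicator_of_mem ht _
      rw [this]
      exact le_ustep hM hP ⟨le_of_lt ht.1, ht.2⟩
    · have htIco : t ∉ Set.Ico u v := fun h =>
        ht ⟨lt_of_le_of_ne h.1 (Ne.symm hu), h.2⟩
      have h0 : ustep f n x t = 0 := pstep_zero hP htIco
      have h1 : fLim t = 0 := Set.indicator_of_notMem ht _
      rw [h0, h1]
  refine ⟨hIntOn, ?_, ?_⟩
  · apply le_antisymm
    · apply csSup_le (lowerDarboux_nonempty huv)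
      rintro s ⟨n, x, hP, rfl⟩
      exact hlow_le n x hP
    · apply le_of_tendsto hDCTlow
      apply Filter.Eventually.of_forall
      intro N
      apply le_csSup (lowerDarboux_bddAbove hM huv)
      exact ⟨N + 1, unif u v (N + 1), hPn N, rfl⟩
  · apply le_antisymm
    · apply ge_of_tendsto hDCThigh
      apply Filter.Eventually.of_forall
      intro N
      apply csInf_le (upperDarboux_bddBelow hM huv)
      exact ⟨N + 1, unif u v (N + 1), hPn N, rfl⟩
    · apply le_csInf (upperDarboux_nonempty huv)
      rintro s ⟨n, x, hP, rfl⟩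
      exact hhigh_ge n x hP

end Varberg
namespace Varberg
open Set MeasureTheory Filter Topology
open scoped ENNReal

variable {u v M : ℝ} {f : ℝ → ℝ}

lemma aecont_of_riemann (huv : u ≤ v) (hM : ∀ t ∈ Set.Icc u v, |f t| ≤ M)
    (heq : lowerDarboux f u v = upperDarboux f u v) :
    ∀ᵐ t ∂volume, t ∈ Set.Icc u v → ContinuousWithinAt f (Set.Icc u v) t := by
  rcases eq_or_lt_of_le huv with rfl | hlt
  · rw [MeasureTheory.ae_iff]
    refine measure_mono_null (fun t ht => ?_) (measure_singleton u)
    simp only [Set.mem_setOf_eq, Classical.not_imp] at ht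
    have := ht.1
    rw [Set.Icc_self] at this
    exact this
  -- discontinuity "at level 1/(k+1)" sets
  set D : ℕ → Set ℝ := fun k => {t ∈ Set.Ioo u v | ∀ δ > (0:ℝ), ∃ s ∈ Set.Icc u v,
    |s - t| < δ ∧ 1 / (k + 1 : ℝ) ≤ |f s - f t|} with hD
  have claim2 : ∀ k : ℕ, volume (D k) = 0 := by
    intro k
    have hη : (0:ℝ) < 1 / (k + 1 : ℝ) := by positivity
    set η := 1 / (k + 1 : ℝ) with hηdef
    -- the key estimate
    have key : ∀ ε' > (0:ℝ), volume (D k) ≤ ENNReal.ofReal (2 * ε' / η) := by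
      intro ε' hε'
      obtain ⟨lp, hlpmem, hlp⟩ := exists_lt_of_lt_csSup (lowerDarboux_nonempty (f := f) huv)
        (show lowerDarboux f u v - ε' < lowerDarboux f u v by linarith)
      obtain ⟨n, x, hP, rfl⟩ := hlpmem
      obtain ⟨up, hupmem, hup⟩ := exists_lt_of_csInf_lt (upperDarboux_nonempty (f := f) huv)
        (show upperDarboux f u v < lowerDarboux f u v + ε' by rw [heq]; linarith)
      obtain ⟨m, y, hQ, rfl⟩ := hupmem
      set h : ℝ → ℝ := fun t => ustep f m y t - lstep f n x t with hh
      have hint : Integrable h := Integrable.sub pstep_integrable pstep_integrable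
      have hInth : ∫ t, h t = upperSum f m y - lowerSum f n x := by
        have hu_int : Integrable (ustep f m y) := pstep_integrable
        have hl_int : Integrable (lstep f n x) := pstep_integrable
        show ∫ t, (ustep f m y t - lstep f n x t) = _
        rw [MeasureTheory.integral_sub hu_int hl_int]
        rw [ustep_integral hQ, lstep_integral hP]
      have hnn : ∀ t, 0 ≤ h t := by
        intro t
        show 0 ≤ ustep f m y t - lstep f n x t
        by_cases ht : t ∈ Set.Ico u v
        · have := (lstep_le hM hP ht).trans (le_ustep hM hQ ht)
          linarith
        · rw [show lstep f n x t = 0 from pstep_zero hP ht,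
            show ustep f m y t = 0 from pstep_zero hQ ht]
          simp
      set Mset := {t : ℝ | η ≤ h t} with hMset
      have hMmeas : MeasurableSet Mset := by
        apply measurableSet_le measurable_const
        exact (pstep_measurable.sub pstep_measurable)
      have hMsub : Mset ⊆ Set.Ico u v := by
        intro t ht
        by_contra hc
        have ht' : η ≤ ustep f m y t - lstep f n x t := ht
        rw [show lstep f n x t = 0 from pstep_zero hP hc,
          show ustep f m y t = 0 from pstep_zero hQ hc] at ht'
        simp at ht'
        linarith
      have hMfin : volume Mset < ⊤ :=
        lt_of_le_of_lt (measure_mono (hMsub.trans Set.Ico_subset_Icc_self)) measure_Icc_lt_top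
      -- Markov
      have hMarkov : η * (volume Mset).toReal ≤ ∫ t, h t := by
        have h1 : ∫ t in Mset, (η : ℝ) ≤ ∫ t in Mset, h t := by
          apply MeasureTheory.setIntegral_mono_on ((integrableOn_const_iff).mpr (Or.inr hMfin))
            (hint.integrableOn) hMmeas
          intro t ht
          exact ht
        rw [MeasureTheory.setIntegral_const, smul_eq_mul, mul_comm] at h1
        exact h1.trans (MeasureTheory.setIntegral_le_integral hint
          (Filter.Eventually.of_forall hnn))
      have hsum : ∫ t, h t < 2 * ε' := by
        rw [hInth]; linarith
      have hMvol : volume Mset ≤ ENNReal.ofReal (2 * ε' / η) := by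
        rw [ENNReal.le_ofReal_iff_toReal_le (ne_of_lt hMfin) (by positivity)]
        rw [le_div_iff₀ hη, mul_comm]
        exact hMarkov.trans (le_of_lt hsum)
      -- partition points
      set T : Set ℝ := (Set.range fun i : Fin (n+1) => x i) ∪
        (Set.range fun i : Fin (m+1) => y i) with hT
      have hTfin : T.Finite := (Set.finite_range _).union (Set.finite_range _)
      -- D k ⊆ Mset ∪ T
      have hsub : D k ⊆ Mset ∪ T := by
        intro t ht
        by_cases htT : t ∈ T
        · exact Or.inr htT
        refine Or.inl ?_
        obtain ⟨htIoo, hprop⟩ := ht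
        obtain ⟨i, hi, hx1, hx2⟩ := part_exists_idx hP (le_of_lt htIoo.1) htIoo.2
        obtain ⟨j, hj, hy1, hy2⟩ := part_exists_idx hQ (le_of_lt htIoo.1) htIoo.2
        have hxi : x i < t := by
          rcases eq_or_lt_of_le hx1 with heq' | h'
          · exfalso; apply htT; rw [hT]; left; exact ⟨⟨i, Nat.lt_succ_of_lt hi⟩, heq'⟩
          · exact h'
        have hyj : y j < t := by
          rcases eq_or_lt_of_le hy1 with heq' | h'
          · exfalso; apply htT; rw [hT]; right; exact ⟨⟨j, Nat.lt_succ_of_lt hj⟩, heq'⟩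
          · exact h'
        set δ := min (min (t - x i) (x (i+1) - t)) (min (t - y j) (y (j+1) - t)) with hδ
        have hδpos : 0 < δ := by
          apply lt_min (lt_min (by linarith) (by linarith)) (lt_min (by linarith) (by linarith))
        obtain ⟨s, hs, hsδ, hsf⟩ := hprop δ hδpos
        have hsx : s ∈ Set.Icc (x i) (x (i+1)) := by
          rw [abs_lt] at hsδ
          constructor
          · have : δ ≤ t - x i := (min_le_left _ _).trans (min_le_left _ _)
            linarith
          · have : δ ≤ x (i+1) - t := (min_le_left _ _).trans (min_le_right _ _)
            linarith
        have hsy : s ∈ Set.Icc (y j) (y (j+1)) := by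
          rw [abs_lt] at hsδ
          constructor
          · have : δ ≤ t - y j := (min_le_right _ _).trans (min_le_left _ _)
            linarith
          · have : δ ≤ y (j+1) - t := (min_le_right _ _).trans (min_le_right _ _)
            linarith
        have htx : t ∈ Set.Icc (x i) (x (i+1)) := ⟨hx1, le_of_lt hx2⟩
        have hty : t ∈ Set.Icc (y j) (y (j+1)) := ⟨hy1, le_of_lt hy2⟩
        have hlval : lstep f n x t = sInf (f '' Set.Icc (x i) (x (i+1))) :=
          pstep_eq hP hi ⟨hx1, hx2⟩
        have huval : ustep f m y t = sSup (f '' Set.Icc (y j) (y (j+1))) :=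
          pstep_eq hQ hj ⟨hy1, hy2⟩
        show η ≤ ustep f m y t - lstep f n x t
        rw [hlval, huval]
        have h1 := sInf_im_le hM (part_icc_subset hP hi) hsx
        have h2 := sInf_im_le hM (part_icc_subset hP hi) htx
        have h3 := le_sSup_im hM (part_icc_subset hQ hj) hsy
        have h4 := le_sSup_im hM (part_icc_subset hQ hj) hty
        rcases abs_cases (f s - f t) with ⟨he, _⟩ | ⟨he, _⟩ <;> rw [he] at hsf <;> linarith
      calc volume (D k) ≤ volume (Mset ∪ T) := measure_mono hsub
        _ ≤ volume Mset + volume T := measure_union_le _ _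
        _ = volume Mset := by rw [hTfin.measure_zero volume, add_zero]
        _ ≤ ENNReal.ofReal (2 * ε' / η) := hMvol
    -- conclude volume (D k) = 0
    have htend : Tendsto (fun m : ℕ => ENNReal.ofReal (2 * (1/(m+1:ℝ)) / η)) atTop (𝓝 0) := by
      rw [show (0 : ℝ≥0∞) = ENNReal.ofReal 0 by simp]
      apply ENNReal.tendsto_ofReal
      have : Tendsto (fun m : ℕ => 1/(m+1:ℝ)) atTop (𝓝 0) := tendsto_one_div_add_atTop_nhds_zero_nat
      have h2 : Tendsto (fun m : ℕ => 2 * (1/(m+1:ℝ)) / η) atTop (𝓝 (2 * 0 / η)) := by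
        apply Tendsto.div_const
        exact this.const_mul 2
      simpa using h2
    have hle : volume (D k) ≤ 0 := ge_of_tendsto htend (Filter.Eventually.of_forall fun m =>
      key (1/(m+1:ℝ)) (by positivity))
    exact le_antisymm hle zero_le
  -- assemble
  rw [MeasureTheory.ae_iff]
  have hnull : volume ({u, v} ∪ ⋃ k, D k) = 0 := by
    apply measure_union_null
    · apply Set.Finite.measure_zero
      exact (Set.finite_singleton v).insert u
    · exact measure_iUnion_null claim2
  refine measure_mono_null ?_ hnull
  · intro t ht
    simp only [Set.mem_setOf_eq, Classical.not_imp] at ht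
    obtain ⟨htIcc, htnc⟩ := ht
    by_cases htu : t = u
    · exact Or.inl (Or.inl htu)
    by_cases htv : t = v
    · exact Or.inl (Or.inr htv)
    have htIoo : t ∈ Set.Ioo u v := ⟨lt_of_le_of_ne htIcc.1 (Ne.symm htu),
      lt_of_le_of_ne htIcc.2 htv⟩
    rw [Metric.continuousWithinAt_iff] at htnc
    push_neg at htnc
    obtain ⟨ε, hε, hprop⟩ := htnc
    obtain ⟨k, hk⟩ := exists_nat_one_div_lt hε
    refine Or.inr (Set.mem_iUnion.mpr ⟨k, htIoo, fun δ hδ => ?_⟩)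
    obtain ⟨s, hsmem, hsδ, hsε⟩ := hprop δ hδ
    refine ⟨s, hsmem, ?_, ?_⟩
    · rw [Real.dist_eq] at hsδ; exact hsδ
    · rw [Real.dist_eq] at hsε
      push_cast
      exact (le_of_lt hk).trans hsε

end Varberg
namespace Varberg
open Set MeasureTheory Filter Topology intervalIntegral
open scoped ENNReal

variable {u v M : ℝ} {f : ℝ → ℝ}

lemma intervalIntegrable_of_integrableOn (hi : IntegrableOn f (Set.Icc u v))
    {p q : ℝ} (hp : p ∈ Set.Icc u v) (hq : q ∈ Set.Icc u v) :
    IntervalIntegrable f volume p q := by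
  apply IntegrableOn.intervalIntegrable
  apply hi.mono_set
  exact Set.uIcc_subset_Icc hp hq

lemma primitive_lipschitz (hi : IntegrableOn f (Set.Icc u v))
    (hM : ∀ t ∈ Set.Icc u v, |f t| ≤ M) {p q : ℝ} (hp : p ∈ Set.Icc u v)
    (hq : q ∈ Set.Icc u v) : |∫ s in p..q, f s| ≤ M * |q - p| := by
  rw [← Real.norm_eq_abs]
  apply intervalIntegral.norm_integral_le_of_norm_le_const
  intro s hs
  rw [Set.mem_uIoc] at hs
  have hsmem : s ∈ Set.Icc u v := by
    rcases hs with ⟨h1, h2⟩ | ⟨h1, h2⟩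
    · exact ⟨hp.1.trans (le_of_lt h1), h2.trans hq.2⟩
    · exact ⟨hq.1.trans (le_of_lt h1), h2.trans hp.2⟩
  rw [Real.norm_eq_abs]
  exact hM s hsmem

lemma hasDerivWithinAt_primitive (hi : IntegrableOn f (Set.Icc u v))
    {t₀ : ℝ} (ht₀ : t₀ ∈ Set.Icc u v) (hct : ContinuousWithinAt f (Set.Icc u v) t₀) :
    HasDerivWithinAt (fun x => ∫ s in u..x, f s) (f t₀) (Set.Icc u v) t₀ := by
  rw [hasDerivWithinAt_iff_isLittleO, Asymptotics.isLittleO_iff]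
  intro ε hε
  obtain ⟨δ, hδ, hδ2⟩ := Metric.continuousWithinAt_iff.mp hct ε hε
  rw [eventually_nhdsWithin_iff, Metric.eventually_nhds_iff]
  refine ⟨δ, hδ, fun x hxδ hx => ?_⟩
  have h1 : IntervalIntegrable f volume u t₀ :=
    intervalIntegrable_of_integrableOn hi ⟨le_rfl, (ht₀.1.trans ht₀.2 : u ≤ v)⟩ ht₀
  have h2 : IntervalIntegrable f volume t₀ x :=
    intervalIntegrable_of_integrableOn hi ht₀ hx
  have hadd : ∫ s in u..x, f s = (∫ s in u..t₀, f s) + ∫ s in t₀..x, f s :=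
    (intervalIntegral.integral_add_adjacent_intervals h1 h2).symm
  have hsub : (∫ s in t₀..x, f s) - (x - t₀) • f t₀ = ∫ s in t₀..x, (f s - f t₀) := by
    rw [intervalIntegral.integral_sub h2 intervalIntegrable_const,
      intervalIntegral.integral_const]
  have hbound : ‖∫ s in t₀..x, (f s - f t₀)‖ ≤ ε * |x - t₀| := by
    apply intervalIntegral.norm_integral_le_of_norm_le_const
    intro s hs
    rw [Set.mem_uIoc] at hs
    have hsmem : s ∈ Set.Icc u v := by
      rcases hs with ⟨hs1, hs2⟩ | ⟨hs1, hs2⟩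
      · exact ⟨ht₀.1.trans (le_of_lt hs1), hs2.trans hx.2⟩
      · exact ⟨hx.1.trans (le_of_lt hs1), hs2.trans ht₀.2⟩
    have hsd : dist s t₀ < δ := by
      rw [Real.dist_eq]
      rw [Real.dist_eq] at hxδ
      rcases hs with ⟨hs1, hs2⟩ | ⟨hs1, hs2⟩ <;> rw [abs_lt] at hxδ ⊢ <;>
        constructor <;> linarith
    have := hδ2 hsmem hsd
    rw [Real.dist_eq] at this
    rw [Real.norm_eq_abs]
    exact le_of_lt this
  calc ‖(∫ s in u..x, f s) - (∫ s in u..t₀, f s) - (x - t₀) • f t₀‖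
      = ‖∫ s in t₀..x, (f s - f t₀)‖ := by rw [hadd, ← hsub]; ring_nf
    _ ≤ ε * |x - t₀| := hbound
    _ = ε * ‖x - t₀‖ := by rw [Real.norm_eq_abs]

end Varberg
namespace Varberg
open Set MeasureTheory Filter Topology
open scoped ENNReal

/-- Cousin's lemma: existence of a tagged partition subordinate to a gauge. -/
lemma cousin {c d : ℝ} (hcd : c ≤ d) (r : ℝ → ℝ) (hr : ∀ t ∈ Set.Icc c d, 0 < r t) :
    ∃ (n : ℕ) (t τ : ℕ → ℝ), t 0 = c ∧ t n = d ∧ (∀ i < n, t i ≤ t (i + 1)) ∧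
      (∀ i < n, τ i ∈ Set.Icc (t i) (t (i + 1)) ∧ τ i ∈ Set.Icc c d ∧
        t (i + 1) - t i < r (τ i)) := by
  classical
  set S : Set ℝ := {z | z ∈ Set.Icc c d ∧ ∃ (n : ℕ) (t τ : ℕ → ℝ), t 0 = c ∧ t n = z ∧
    (∀ i < n, t i ≤ t (i + 1)) ∧ (∀ i < n, τ i ∈ Set.Icc (t i) (t (i + 1)) ∧
      τ i ∈ Set.Icc c d ∧ t (i + 1) - t i < r (τ i))} with hS
  have hcS : c ∈ S := ⟨⟨le_rfl, hcd⟩, 0, fun _ => c, fun _ => c, rfl, rfl,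
    fun i hi => absurd hi (Nat.not_lt_zero i), fun i hi => absurd hi (Nat.not_lt_zero i)⟩
  have hSne : S.Nonempty := ⟨c, hcS⟩
  have hSbdd : BddAbove S := ⟨d, fun z hz => hz.1.2⟩
  set m := sSup S with hm
  have hmIcc : m ∈ Set.Icc c d := ⟨le_csSup hSbdd hcS, csSup_le hSne fun z hz => hz.1.2⟩
  have hrm : 0 < r m := hr m hmIcc
  obtain ⟨z, hzS, hzm⟩ := exists_lt_of_lt_csSup hSne
    (show m - r m / 2 < m by linarith)
  have hzle : z ≤ m := le_csSup hSbdd hzS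
  set w := min d (m + r m / 2) with hw
  have hmw : m ≤ w := le_min hmIcc.2 (by linarith)
  have hwIcc : w ∈ Set.Icc c d := ⟨hmIcc.1.trans hmw, min_le_left _ _⟩
  have hwS : w ∈ S := by
    obtain ⟨hzIcc, n, t, τ, ht0, htn, hmono, htag⟩ := hzS
    set t' : ℕ → ℝ := fun i => if i ≤ n then t i else w with ht'
    set τ' : ℕ → ℝ := fun i => if i < n then τ i else m with hτ'
    have ht'eq : ∀ i, i ≤ n → t' i = t i := fun i hi => if_pos hi
    have ht'top : t' (n + 1) = w := if_neg (Nat.not_succ_le_self n)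
    have hτ'eq : ∀ i, i < n → τ' i = τ i := fun i hi => if_pos hi
    have hτ'top : τ' n = m := if_neg (lt_irrefl n)
    refine ⟨hwIcc, n + 1, t', τ', ?_, ?_, ?_, ?_⟩
    · rw [ht'eq 0 (Nat.zero_le n)]; exact ht0
    · exact ht'top
    · intro i hi
      rcases Nat.lt_succ_iff_lt_or_eq.mp hi with hi' | rfl
      · rw [ht'eq i (le_of_lt hi'), ht'eq (i + 1) (Nat.succ_le_of_lt hi')]
        exact hmono i hi'
      · rw [ht'eq i le_rfl, ht'top, htn]
        exact hzle.trans hmw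
    · intro i hi
      rcases Nat.lt_succ_iff_lt_or_eq.mp hi with hi' | rfl
      · rw [ht'eq i (le_of_lt hi'), ht'eq (i + 1) (Nat.succ_le_of_lt hi'), hτ'eq i hi']
        exact htag i hi'
      · rw [ht'eq i le_rfl, ht'top, hτ'top, htn]
        refine ⟨⟨hzle, hmw⟩, hmIcc, ?_⟩
        have h1 : w ≤ m + r m / 2 := min_le_right _ _
        linarith
  have hwm : w ≤ m := le_csSup hSbdd hwS
  have hmd : m = d := by
    by_contra hne
    have hlt : m < d := lt_of_le_of_ne hmIcc.2 hne
    have : m < w := lt_min hlt (by linarith)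
    linarith
  have hwd : w = d := le_antisymm hwIcc.2 (by rw [← hmd]; exact hmw)
  rw [hwd] at hwS
  obtain ⟨_, n, t, τ, ht0, htn, hmono, htag⟩ := hwS
  exact ⟨n, t, τ, ht0, htn, hmono, htag⟩

/-- An absolutely continuous function with a.e. zero derivative is constant. -/
lemma eq_of_ac_deriv_zero {Z : ℝ → ℝ} {c d : ℝ} (hcd : c ≤ d)
    (hZ : AbsolutelyContinuousOn Z c d)
    (h0 : ∀ᵐ t ∂MeasureTheory.volume, t ∈ Set.Icc c d → HasDerivWithinAt Z 0 (Set.Icc c d) t) :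
    Z d = Z c := by
  classical
  have key : ∀ ε > (0:ℝ), |Z d - Z c| ≤ ε * (d - c) + ε := by
    intro ε hε
    obtain ⟨δ, hδ, hAC⟩ := hZ ε hε
    set N : Set ℝ := {t | t ∈ Set.Icc c d ∧ ¬HasDerivWithinAt Z 0 (Set.Icc c d) t} with hN
    have hNnull : MeasureTheory.volume N = 0 := by
      rw [MeasureTheory.ae_iff] at h0
      apply measure_mono_null _ h0
      intro t ht
      simp only [Set.mem_setOf_eq, Classical.not_imp]
      exact ht
    obtain ⟨U, hUN, hUopen, hUvol⟩ := Set.exists_isOpen_lt_of_lt N (ENNReal.ofReal δ)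
      (by rw [hNnull]; exact ENNReal.ofReal_pos.mpr hδ)
    have hgauge : ∀ t : ℝ, ∃ ρ, 0 < ρ ∧
        ((t ∈ Set.Icc c d ∧ t ∉ N) → ∀ s ∈ Set.Icc c d, |s - t| < ρ → |Z s - Z t| ≤ ε * |s - t|)
        ∧ (t ∈ N → Metric.ball t ρ ⊆ U) := by
      intro t
      by_cases htN : t ∈ N
      · obtain ⟨ρ, hρ, hball⟩ := Metric.isOpen_iff.mp hUopen t (hUN htN)
        exact ⟨ρ, hρ, fun h => absurd htN h.2, fun _ => hball⟩
      · by_cases htI : t ∈ Set.Icc c d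
        · have hderiv : HasDerivWithinAt Z 0 (Set.Icc c d) t := by
            by_contra hc
            exact htN ⟨htI, hc⟩
          rw [hasDerivWithinAt_iff_isLittleO, Asymptotics.isLittleO_iff] at hderiv
          have hev := hderiv (c := ε) hε
          rw [eventually_nhdsWithin_iff, Metric.eventually_nhds_iff] at hev
          obtain ⟨ρ, hρ, hprop⟩ := hev
          refine ⟨ρ, hρ, fun _ s hs hsρ => ?_, fun h => absurd h htN⟩
          have := hprop (y := s) (by rw [Real.dist_eq]; exact hsρ) hs
          simp only [smul_zero, sub_zero, Real.norm_eq_abs] at this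
          exact this
        · exact ⟨1, one_pos, fun h => absurd h.1 htI, fun h => absurd h htN⟩
    choose r hr0 hrgood hrbad using hgauge
    obtain ⟨n, t, τ, ht0, htn, hmono, htag⟩ := cousin hcd r (fun t _ => hr0 t)
    have hmono' : ∀ {i j}, i ≤ j → j ≤ n → t i ≤ t j := by
      intro i j hij hj
      induction j with
      | zero => simp_all
      | succ k ih =>
        rcases Nat.eq_or_lt_of_le hij with rfl | hlt
        · exact le_rfl
        · exact (ih (Nat.lt_succ_iff.mp hlt) (le_of_lt (Nat.lt_of_succ_le hj))).trans
            (hmono k (Nat.lt_of_succ_le hj))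
    have htIcc : ∀ i ≤ n, t i ∈ Set.Icc c d := by
      intro i hi
      constructor
      · rw [← ht0]; exact hmono' (Nat.zero_le i) hi
      · rw [← htn]; exact hmono' hi le_rfl
    have htel : Z d - Z c = ∑ i ∈ Finset.range n, (Z (t (i + 1)) - Z (t i)) := by
      rw [Finset.sum_range_sub (fun i => Z (t i)) n, ht0, htn]
    have habs : |Z d - Z c| ≤ ∑ i ∈ Finset.range n, |Z (t (i + 1)) - Z (t i)| := by
      rw [htel]; exact Finset.abs_sum_le_sum_abs _ _
    set B := (Finset.range n).filter (fun i => τ i ∈ N) with hB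
    have hgood : ∀ i < n, τ i ∉ N → |Z (t (i + 1)) - Z (t i)| ≤ ε * (t (i + 1) - t i) := by
      intro i hi hτ
      obtain ⟨hτmem, hτIcc, hτr⟩ := htag i hi
      have h1 := hrgood (τ i) ⟨hτIcc, hτ⟩ (t (i + 1)) (htIcc (i+1) (Nat.succ_le_of_lt hi))
        (by rw [abs_of_nonneg (by linarith [hτmem.1, hτmem.2] : (0:ℝ) ≤ t (i+1) - τ i)]
            linarith [hτmem.1])
      have h2 := hrgood (τ i) ⟨hτIcc, hτ⟩ (t i) (htIcc i (le_of_lt hi))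
        (by rw [abs_of_nonpos (by linarith [hτmem.1] : t i - τ i ≤ 0)]
            linarith [hτmem.2])
      rw [abs_of_nonneg (by linarith [hτmem.1, hτmem.2] : (0:ℝ) ≤ t (i+1) - τ i)] at h1
      rw [abs_of_nonpos (by linarith [hτmem.1] : t i - τ i ≤ 0)] at h2
      have h3 : |Z (t (i + 1)) - Z (t i)| ≤ |Z (t (i+1)) - Z (τ i)| + |Z (τ i) - Z (t i)| :=
        abs_sub_le _ _ _
      have h4 : |Z (τ i) - Z (t i)| = |Z (t i) - Z (τ i)| := abs_sub_comm _ _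
      rw [h4] at h3
      calc |Z (t (i + 1)) - Z (t i)|
          ≤ |Z (t (i+1)) - Z (τ i)| + |Z (t i) - Z (τ i)| := h3
        _ ≤ ε * (t (i + 1) - τ i) + ε * (τ i - t i) := by
            apply add_le_add h1
            calc |Z (t i) - Z (τ i)| ≤ ε * -(t i - τ i) := h2
              _ = ε * (τ i - t i) := by ring
        _ = ε * (t (i + 1) - t i) := by ring
    have hbadU : ∀ i ∈ B, Set.Ioo (t i) (t (i + 1)) ⊆ U := by
      intro i hiB
      rw [hB, Finset.mem_filter] at hiB
      obtain ⟨hi, hτN⟩ := hiB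
      rw [Finset.mem_range] at hi
      obtain ⟨hτmem, hτIcc, hτr⟩ := htag i hi
      refine fun s hs => hrbad (τ i) hτN ?_
      rw [Metric.mem_ball, Real.dist_eq, abs_lt]
      constructor
      · linarith [hτmem.2, hs.1]
      · linarith [hτmem.1, hs.2]
    set uu : ℕ → ℝ := fun i => t i with huu
    set vv : ℕ → ℝ := fun i => if τ i ∈ N ∧ i < n then t (i + 1) else t i with hvv
    have hvveq : ∀ i, τ i ∈ N ∧ i < n → vv i = t (i + 1) := fun i hi => if_pos hi
    have hvvne : ∀ i, ¬(τ i ∈ N ∧ i < n) → vv i = t i := fun i hi => if_neg hi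
    have huueq : ∀ i, uu i = t i := fun i => rfl
    have hfam : ∀ i < n, c ≤ uu i ∧ uu i ≤ vv i ∧ vv i ≤ d := by
      intro i hi
      refine ⟨(htIcc i (le_of_lt hi)).1, ?_, ?_⟩
      · by_cases h : τ i ∈ N ∧ i < n
        · rw [huueq, hvveq i h]; exact hmono i hi
        · rw [huueq, hvvne i h]
      · by_cases h : τ i ∈ N ∧ i < n
        · rw [hvveq i h]; exact (htIcc (i+1) (Nat.succ_le_of_lt hi)).2
        · rw [hvvne i h]; exact (htIcc i (le_of_lt hi)).2
    have hIoo_disj : ∀ i < n, ∀ j < n, i ≠ j →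
        Disjoint (Set.Ioo (t i) (t (i + 1))) (Set.Ioo (t j) (t (j + 1))) := by
      intro i hi j hj hij
      rcases lt_or_gt_of_ne hij with h | h
      · apply Set.disjoint_left.mpr
        intro s hs1 hs2
        have : t (i + 1) ≤ t j := hmono' (Nat.succ_le_of_lt h) (le_of_lt hj)
        linarith [hs1.2, hs2.1]
      · apply Set.disjoint_left.mpr
        intro s hs1 hs2
        have : t (j + 1) ≤ t i := hmono' (Nat.succ_le_of_lt h) (le_of_lt hi)
        linarith [hs1.1, hs2.2]
    have hsubIoo : ∀ i < n, Set.Ioo (uu i) (vv i) ⊆ Set.Ioo (t i) (t (i + 1)) := by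
      intro i hi s hs
      by_cases h : τ i ∈ N ∧ i < n
      · rw [huueq, hvveq i h] at hs; exact hs
      · rw [huueq, hvvne i h] at hs
        exact absurd hs.2 (not_lt.mpr (le_of_lt hs.1))
    have hdisj : ∀ i < n, ∀ j < n, i ≠ j →
        Disjoint (Set.Ioo (uu i) (vv i)) (Set.Ioo (uu j) (vv j)) := by
      intro i hi j hj hij
      exact Set.disjoint_of_subset (hsubIoo i hi) (hsubIoo j hj) (hIoo_disj i hi j hj hij)
    have hBsub : B ⊆ Finset.range n := Finset.filter_subset _ _
    have hlen : (∑ i ∈ Finset.range n, (vv i - uu i)) < δ := by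
      have heq1 : (∑ i ∈ Finset.range n, (vv i - uu i)) = ∑ i ∈ B, (t (i + 1) - t i) := by
        have h1 : ∀ i ∈ Finset.range n, vv i - uu i =
            if τ i ∈ N ∧ i < n then t (i + 1) - t i else 0 := by
          intro i hi
          by_cases h : τ i ∈ N ∧ i < n
          · rw [huueq, hvveq i h, if_pos h]
          · rw [huueq, hvvne i h, if_neg h]; ring
        rw [Finset.sum_congr rfl h1, ← Finset.sum_filter]
        apply Finset.sum_congr _ (fun _ _ => rfl)
        apply Finset.filter_congr
        intro i hi
        rw [Finset.mem_range] at hi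
        simp [hi]
      rw [heq1]
      have hvolsum : ENNReal.ofReal (∑ i ∈ B, (t (i + 1) - t i)) =
          MeasureTheory.volume (⋃ i ∈ B, Set.Ioo (t i) (t (i + 1))) := by
        rw [measure_biUnion_finset ?_ (fun i _ => measurableSet_Ioo)]
        · rw [ENNReal.ofReal_sum_of_nonneg]
          · exact Finset.sum_congr rfl (fun i _ => Real.volume_Ioo.symm)
          · intro i hiB
            have hi := Finset.mem_range.mp (hBsub hiB)
            linarith [hmono i hi]
        · intro i hi j hj hij
          rw [Finset.mem_coe, hB, Finset.mem_filter, Finset.mem_range] at hi hj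
          exact hIoo_disj i hi.1 j hj.1 hij
      have hle : MeasureTheory.volume (⋃ i ∈ B, Set.Ioo (t i) (t (i + 1))) ≤
          MeasureTheory.volume U := by
        apply measure_mono
        apply Set.iUnion₂_subset
        intro i hiB
        exact hbadU i hiB
      have := lt_of_le_of_lt (hvolsum ▸ hle) hUvol
      exact (ENNReal.ofReal_lt_ofReal_iff hδ).mp this
    have hACsum := hAC n uu vv hfam hdisj hlen
    have hbadsum : ∑ i ∈ B, |Z (t (i + 1)) - Z (t i)| < ε := by
      have h1 : ∑ i ∈ B, |Z (t (i + 1)) - Z (t i)| = ∑ i ∈ B, |Z (vv i) - Z (uu i)| := by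
        apply Finset.sum_congr rfl
        intro i hiB
        rw [hB, Finset.mem_filter, Finset.mem_range] at hiB
        rw [huueq, hvveq i ⟨hiB.2, hiB.1⟩]
      rw [h1]
      exact lt_of_le_of_lt (Finset.sum_le_sum_of_subset_of_nonneg hBsub
        (fun i _ _ => abs_nonneg _)) hACsum
    have hgoodsum : ∑ i ∈ (Finset.range n).filter (fun i => τ i ∉ N),
        |Z (t (i + 1)) - Z (t i)| ≤ ε * (d - c) := by
      calc ∑ i ∈ (Finset.range n).filter (fun i => τ i ∉ N), |Z (t (i + 1)) - Z (t i)|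
          ≤ ∑ i ∈ (Finset.range n).filter (fun i => τ i ∉ N), ε * (t (i + 1) - t i) := by
            apply Finset.sum_le_sum
            intro i hi
            rw [Finset.mem_filter, Finset.mem_range] at hi
            exact hgood i hi.1 hi.2
        _ ≤ ∑ i ∈ Finset.range n, ε * (t (i + 1) - t i) := by
            apply Finset.sum_le_sum_of_subset_of_nonneg (Finset.filter_subset _ _)
            intro i hi _
            have h1 := hmono i (Finset.mem_range.mp hi)
            nlinarith
        _ = ε * (d - c) := by
            rw [← Finset.mul_sum, Finset.sum_range_sub (fun i => t i) n, ht0, htn]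
    calc |Z d - Z c| ≤ ∑ i ∈ Finset.range n, |Z (t (i + 1)) - Z (t i)| := habs
      _ = (∑ i ∈ B, |Z (t (i + 1)) - Z (t i)|) +
          ∑ i ∈ (Finset.range n).filter (fun i => τ i ∉ N), |Z (t (i + 1)) - Z (t i)| := by
          rw [hB]
          exact (Finset.sum_filter_add_sum_filter_not (Finset.range n)
            (fun i => τ i ∈ N) _).symm
      _ ≤ ε + ε * (d - c) := add_le_add (le_of_lt hbadsum) hgoodsum
      _ = ε * (d - c) + ε := by ring
  by_contra hne
  have habs : 0 < |Z d - Z c| := abs_pos.mpr (sub_ne_zero_of_ne hne)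
  have hK : (0:ℝ) < d - c + 1 := by linarith
  have hkey := key (|Z d - Z c| / (2 * (d - c + 1))) (by positivity)
  have h2 : |Z d - Z c| / (2 * (d - c + 1)) * (d - c) + |Z d - Z c| / (2 * (d - c + 1))
      = |Z d - Z c| / 2 := by field_simp
  rw [h2] at hkey
  linarith

end Varberg
namespace Varberg
open Set MeasureTheory Filter Topology
open scoped ENNReal NNReal

lemma lipschitzOnWith_image_null {h : ℝ → ℝ} {s : Set ℝ} {K : ℝ≥0}
    (hl : LipschitzOnWith K h s) (hs : MeasureTheory.volume s = 0) :
    MeasureTheory.volume (h '' s) = 0 := by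
  have h1 := hl.hausdorffMeasure_image_le (zero_le_one (α := ℝ))
  rw [MeasureTheory.hausdorffMeasure_real] at h1
  apply le_antisymm _ zero_le
  apply h1.trans
  rw [hs, mul_zero]

lemma null_bad_set {G g : ℝ → ℝ} {c d : ℝ} {D : Set ℝ}
    (hD : MeasureTheory.volume D = 0) :
    MeasureTheory.volume {t | t ∈ Set.Icc c d ∧ HasDerivWithinAt G (g t) (Set.Icc c d) t ∧
      g t ≠ 0 ∧ G t ∈ D} = 0 := by
  classical
  set E := {t | t ∈ Set.Icc c d ∧ HasDerivWithinAt G (g t) (Set.Icc c d) t ∧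
    g t ≠ 0 ∧ G t ∈ D} with hE
  set A : ℕ → ℤ → Set ℝ := fun n k =>
    {t | t ∈ Set.Icc c d ∧ G t ∈ D ∧ ∀ s ∈ Set.Icc c d, |s - t| ≤ 1 / (n + 1 : ℝ) →
      |s - t| ≤ (n + 1 : ℝ) * |G s - G t|} ∩
    Set.Icc ((k : ℝ) / (n + 1 : ℝ)) ((k + 1 : ℝ) / (n + 1 : ℝ)) with hA
  -- coverage
  have hcover : E ⊆ ⋃ (n : ℕ) (k : ℤ), A n k := by
    intro t ht
    obtain ⟨htIcc, hderiv, hg0, htD⟩ := ht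
    have hgabs : 0 < |g t| := abs_pos.mpr hg0
    rw [hasDerivWithinAt_iff_isLittleO, Asymptotics.isLittleO_iff] at hderiv
    have hev := hderiv (c := |g t| / 2) (by positivity)
    rw [eventually_nhdsWithin_iff, Metric.eventually_nhds_iff] at hev
    obtain ⟨ρ, hρ, hprop⟩ := hev
    have hlow : ∀ s ∈ Set.Icc c d, |s - t| < ρ → |g t| / 2 * |s - t| ≤ |G s - G t| := by
      intro s hs hsρ
      have h1 := hprop (y := s) (by rw [Real.dist_eq]; exact hsρ) hs
      rw [Real.norm_eq_abs, Real.norm_eq_abs, smul_eq_mul] at h1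
      have h2 : |(s - t) * g t| - |G s - G t| ≤ |G s - G t - (s - t) * g t| := by
        have h2' := abs_sub_abs_le_abs_sub ((s - t) * g t) (G s - G t)
        rw [abs_sub_comm ((s - t) * g t)] at h2'
        exact h2'
      rw [abs_mul] at h2
      have h3 : |g t| / 2 * |s - t| + |g t| / 2 * |s - t| = |s - t| * |g t| := by ring
      linarith
    obtain ⟨n₁, hn₁⟩ := exists_nat_gt (2 / |g t|)
    obtain ⟨n₂, hn₂⟩ := exists_nat_gt (1 / ρ)
    set n := max n₁ n₂ with hn
    have hnn : (0:ℝ) < (n : ℝ) + 1 := by positivity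
    have hge1 : 2 / |g t| < (n : ℝ) + 1 := by
      have : (n₁ : ℝ) ≤ n := Nat.cast_le.mpr (le_max_left _ _)
      linarith
    have hge2 : 1 / ρ < (n : ℝ) + 1 := by
      have : (n₂ : ℝ) ≤ n := Nat.cast_le.mpr (le_max_right _ _)
      linarith
    have hmesh : 1 / (n + 1 : ℝ) < ρ := by
      rw [div_lt_iff₀ hnn]
      rw [div_lt_iff₀ hρ] at hge2
      linarith
    set k := ⌊t * (n + 1 : ℝ)⌋ with hk
    refine Set.mem_iUnion.mpr ⟨n, Set.mem_iUnion.mpr ⟨k, ⟨?_, ?_⟩⟩⟩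
    · refine ⟨htIcc, htD, fun s hs hsmesh => ?_⟩
      have hsρ : |s - t| < ρ := lt_of_le_of_lt hsmesh hmesh
      have := hlow s hs hsρ
      have hmul : 1 ≤ (n + 1 : ℝ) * (|g t| / 2) := by
        rw [div_lt_iff₀ hgabs] at hge1
        nlinarith
      nlinarith [abs_nonneg (s - t)]
    · constructor
      · rw [div_le_iff₀ hnn]
        exact Int.floor_le _
      · rw [le_div_iff₀ hnn]
        push_cast
        exact le_of_lt (Int.lt_floor_add_one _)
  -- each piece is null
  have hnull : ∀ (n : ℕ) (k : ℤ), MeasureTheory.volume (A n k) = 0 := by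
    intro n k
    have hcontract : ∀ s ∈ A n k, ∀ t ∈ A n k, |s - t| ≤ (n + 1 : ℝ) * |G s - G t| := by
      intro s hs t ht
      obtain ⟨⟨hsIcc, _, hsprop⟩, hsk⟩ := hs
      obtain ⟨⟨htIcc, _, htprop⟩, htk⟩ := ht
      apply htprop s hsIcc
      have hnn : (0:ℝ) < (n : ℝ) + 1 := by positivity
      have hdiff : ((k : ℝ) + 1) / (n + 1 : ℝ) - (k : ℝ) / (n + 1 : ℝ) = 1 / (n + 1 : ℝ) := by
        ring
      rw [abs_le]
      constructor
      · have := hsk.1; have := htk.2; linarith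
      · have := hsk.2; have := htk.1; linarith
    set h : ℝ → ℝ := Function.invFunOn G (A n k) with hh
    have hfix : ∀ t ∈ A n k, h (G t) = t := by
      intro t ht
      have hex : ∃ a ∈ A n k, G a = G t := ⟨t, ht, rfl⟩
      have h1 := Function.invFunOn_eq hex
      have h2 := Function.invFunOn_mem hex
      have := hcontract (h (G t)) h2 t ht
      rw [hh] at this ⊢
      rw [h1] at this
      simp only [sub_self, abs_zero, mul_zero] at this
      have : |Function.invFunOn G (A n k) (G t) - t| = 0 := le_antisymm this (abs_nonneg _)
      have := abs_eq_zero.mp this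
      linarith [this]
    have hsub : A n k ⊆ h '' (G '' (A n k)) := by
      intro t ht
      exact ⟨G t, Set.mem_image_of_mem G ht, hfix t ht⟩
    have hlip : LipschitzOnWith ((n : ℝ≥0) + 1) h (G '' (A n k)) := by
      apply LipschitzOnWith.of_dist_le_mul
      rintro y₁ ⟨t₁, ht₁, rfl⟩ y₂ ⟨t₂, ht₂, rfl⟩
      rw [Real.dist_eq, Real.dist_eq]
      have e1 : h (G t₁) = t₁ := hfix t₁ ht₁
      have e2 : h (G t₂) = t₂ := hfix t₂ ht₂
      rw [e1, e2]
      have := hcontract t₁ ht₁ t₂ ht₂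
      have hcast : ((((n : ℝ≥0) + 1) : ℝ≥0) : ℝ) = (n : ℝ) + 1 := by push_cast; ring
      rw [hcast]
      calc |t₁ - t₂| ≤ (n + 1 : ℝ) * |G t₁ - G t₂| := this
        _ = (n + 1 : ℝ) * |G t₁ - G t₂| := rfl
    have hGnull : MeasureTheory.volume (G '' (A n k)) = 0 := by
      apply measure_mono_null _ hD
      rintro y ⟨t, ht, rfl⟩
      exact ht.1.2.1
    exact measure_mono_null hsub (lipschitzOnWith_image_null hlip hGnull)
  apply measure_mono_null hcover
  apply measure_iUnion_null
  intro n
  exact measure_iUnion_null (hnull n)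

end Varberg

/-- **Varberg's theorem.** Let `f` be Riemann integrable on `[a, b]`, let `G` be
absolutely continuous on `[c, d]` with `G([c, d]) ⊆ [a, b]`, and suppose `G' = g` almost
everywhere on `[c, d]` for some Riemann integrable `g` on `[c, d]`. Then `(f ∘ G) · g` is
Riemann integrable on `[c, d]` and `∫_{G c}^{G d} f(x) dx = ∫_c^d f(G t) g(t) dt`. -/
theorem varberg (a b c d : ℝ) (hab : a ≤ b) (hcd : c ≤ d) (f G g : ℝ → ℝ)
    (hf : RiemannIntegrableOn f a b)
    (hG : AbsolutelyContinuousOn G c d)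
    (hrange : G '' Set.Icc c d ⊆ Set.Icc a b)
    (hg : RiemannIntegrableOn g c d)
    (hG' : ∀ᵐ t ∂MeasureTheory.volume, t ∈ Set.Icc c d →
      HasDerivWithinAt G (g t) (Set.Icc c d) t) :
    RiemannIntegrableOn (fun t => f (G t) * g t) c d ∧
      riemannIntegral f (G c) (G d) = riemannIntegral (fun t => f (G t) * g t) c d := by
  classical
  open Set MeasureTheory Filter Topology Varberg in
  obtain ⟨Mf, hMf⟩ := hf.1
  obtain ⟨Mg, hMg⟩ := hg.1
  have hMf0 : 0 ≤ Mf := (abs_nonneg (f a)).trans (hMf a ⟨le_rfl, hab⟩)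
  have hMg0 : 0 ≤ Mg := (abs_nonneg (g c)).trans (hMg c ⟨le_rfl, hcd⟩)
  have hmap : Set.MapsTo G (Set.Icc c d) (Set.Icc a b) := fun t ht => hrange ⟨t, ht, rfl⟩
  have hfc := Varberg.aecont_of_riemann hab hMf hf.2
  have hgc := Varberg.aecont_of_riemann hcd hMg hg.2
  obtain ⟨hfInt, hfl, hfu⟩ := Varberg.darboux_eq hab hMf hfc
  set D : Set ℝ := {x | x ∈ Set.Icc a b ∧ ¬ContinuousWithinAt f (Set.Icc a b) x} with hD
  have hDnull : MeasureTheory.volume D = 0 := by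
    rw [MeasureTheory.ae_iff] at hfc
    apply measure_mono_null _ hfc
    intro x hx
    simp only [Set.mem_setOf_eq, Classical.not_imp]
    exact hx
  have hEnull := Varberg.null_bad_set (G := G) (g := g) (c := c) (d := d) hDnull
  have hEae : ∀ᵐ t ∂MeasureTheory.volume, t ∉ {t | t ∈ Set.Icc c d ∧
      HasDerivWithinAt G (g t) (Set.Icc c d) t ∧ g t ≠ 0 ∧ G t ∈ D} :=
    measure_eq_zero_iff_ae_notMem.mp hEnull
  set φ : ℝ → ℝ := fun t => f (G t) * g t with hφ
  have hMφ : ∀ t ∈ Set.Icc c d, |φ t| ≤ Mf * Mg := by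
    intro t ht
    rw [hφ]
    show |f (G t) * g t| ≤ Mf * Mg
    rw [abs_mul]
    exact mul_le_mul (hMf _ (hmap ht)) (hMg t ht) (abs_nonneg _) hMf0
  -- a.e. within-continuity of φ
  have hφc : ∀ᵐ t ∂MeasureTheory.volume, t ∈ Set.Icc c d →
      ContinuousWithinAt φ (Set.Icc c d) t := by
    filter_upwards [hgc, hG', hEae] with t hgct hG't hEt
    intro htIcc
    by_cases hgt : g t = 0
    · have hφt0 : φ t = 0 := by rw [hφ]; show f (G t) * g t = 0; rw [hgt, mul_zero]
      show Filter.Tendsto φ (nhdsWithin t (Set.Icc c d)) (nhds (φ t))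
      rw [hφt0]
      have h1 : ContinuousWithinAt g (Set.Icc c d) t := hgct htIcc
      have h2 : Filter.Tendsto (fun s => Mf * |g s|) (nhdsWithin t (Set.Icc c d))
          (nhds (Mf * |g t|)) := (h1.abs.const_mul Mf)
      rw [hgt, abs_zero, mul_zero] at h2
      apply squeeze_zero_norm' _ h2
      filter_upwards [self_mem_nhdsWithin] with s _
      rw [hφ]
      show |f (G s) * g s| ≤ Mf * |g s|
      rw [abs_mul]
      exact mul_le_mul_of_nonneg_right (hMf _ (hmap ‹s ∈ Set.Icc c d›)) (abs_nonneg _)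
    · have hder := hG't htIcc
      have hGt : G t ∈ Set.Icc a b := hmap htIcc
      have hfGt : ContinuousWithinAt f (Set.Icc a b) (G t) := by
        by_contra hc
        exact hEt ⟨htIcc, hder, hgt, ⟨hGt, hc⟩⟩
      exact (hfGt.comp hder.continuousWithinAt hmap).mul (hgct htIcc)
  obtain ⟨hφInt, hφl, hφu⟩ := Varberg.darboux_eq hcd hMφ hφc
  have hRiemannφ : RiemannIntegrableOn φ c d := ⟨⟨Mf * Mg, hMφ⟩, by rw [hφl, hφu]⟩
  -- primitives
  set H : ℝ → ℝ := fun x => ∫ s in a..x, f s with hH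
  set W : ℝ → ℝ := fun t => H (G t) with hW
  set Φ : ℝ → ℝ := fun x => ∫ s in c..x, φ s with hΦ
  set Z : ℝ → ℝ := fun t => W t - Φ t with hZ
  have hsplitH : ∀ p ∈ Set.Icc a b, ∀ q ∈ Set.Icc a b, H q - H p = ∫ s in p..q, f s := by
    intro p hp q hq
    have h1 : IntervalIntegrable f MeasureTheory.volume a p :=
      Varberg.intervalIntegrable_of_integrableOn hfInt ⟨le_rfl, hab⟩ hp
    have h2 : IntervalIntegrable f MeasureTheory.volume p q :=
      Varberg.intervalIntegrable_of_integrableOn hfInt hp hq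
    have h3 := intervalIntegral.integral_add_adjacent_intervals h1 h2
    show (∫ s in a..q, f s) - (∫ s in a..p, f s) = ∫ s in p..q, f s
    linarith
  have hHlip : ∀ p ∈ Set.Icc a b, ∀ q ∈ Set.Icc a b, |H q - H p| ≤ Mf * |q - p| := by
    intro p hp q hq
    rw [hsplitH p hp q hq]
    exact Varberg.primitive_lipschitz hfInt hMf hp hq
  have hsplitΦ : ∀ p ∈ Set.Icc c d, ∀ q ∈ Set.Icc c d, Φ q - Φ p = ∫ s in p..q, φ s := by
    intro p hp q hq
    have h1 : IntervalIntegrable φ MeasureTheory.volume c p :=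
      Varberg.intervalIntegrable_of_integrableOn hφInt ⟨le_rfl, hcd⟩ hp
    have h2 : IntervalIntegrable φ MeasureTheory.volume p q :=
      Varberg.intervalIntegrable_of_integrableOn hφInt hp hq
    have h3 := intervalIntegral.integral_add_adjacent_intervals h1 h2
    show (∫ s in c..q, φ s) - (∫ s in c..p, φ s) = ∫ s in p..q, φ s
    linarith
  have hΦlip : ∀ p ∈ Set.Icc c d, ∀ q ∈ Set.Icc c d, |Φ q - Φ p| ≤ Mf * Mg * |q - p| := by
    intro p hp q hq
    rw [hsplitΦ p hp q hq]
    exact Varberg.primitive_lipschitz hφInt hMφ hp hq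
  -- AC of W
  have hWAC : AbsolutelyContinuousOn W c d := by
    intro ε hε
    obtain ⟨δ, hδ, hACG⟩ := hG (ε / (Mf + 1)) (by positivity)
    refine ⟨δ, hδ, fun n u v hfam hdisj hlen => ?_⟩
    have hGsum := hACG n u v hfam hdisj hlen
    have hterm : ∀ i ∈ Finset.range n, |W (v i) - W (u i)| ≤ Mf * |G (v i) - G (u i)| := by
      intro i hi
      have hi' := Finset.mem_range.mp hi
      obtain ⟨h1, h2, h3⟩ := hfam i hi'
      have hui : u i ∈ Set.Icc c d := ⟨h1, h2.trans h3⟩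
      have hvi : v i ∈ Set.Icc c d := ⟨h1.trans h2, h3⟩
      exact hHlip (G (u i)) (hmap hui) (G (v i)) (hmap hvi)
    have hsum : (∑ i ∈ Finset.range n, |W (v i) - W (u i)|)
        ≤ Mf * ∑ i ∈ Finset.range n, |G (v i) - G (u i)| := by
      rw [Finset.mul_sum]
      exact Finset.sum_le_sum hterm
    have hGnonneg : (0:ℝ) ≤ ∑ i ∈ Finset.range n, |G (v i) - G (u i)| :=
      Finset.sum_nonneg fun i _ => abs_nonneg _
    have hstep : Mf * (∑ i ∈ Finset.range n, |G (v i) - G (u i)|) ≤ Mf * (ε / (Mf + 1)) :=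
      mul_le_mul_of_nonneg_left (le_of_lt hGsum) hMf0
    have hkey : Mf * (ε / (Mf + 1)) < ε := by
      rw [← mul_div_assoc, div_lt_iff₀ (by positivity : (0:ℝ) < Mf + 1)]
      nlinarith
    linarith [hsum, hstep, hkey]
  -- AC of Z
  have hZAC : AbsolutelyContinuousOn Z c d := by
    intro ε hε
    obtain ⟨δ₁, hδ₁, hACW⟩ := hWAC (ε / 2) (by positivity)
    refine ⟨min δ₁ (ε / (2 * (Mf * Mg + 1))), lt_min hδ₁ (by positivity),
      fun n u v hfam hdisj hlen => ?_⟩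
    have hWsum := hACW n u v hfam hdisj (hlen.trans_le (min_le_left _ _))
    have hlen2 : (∑ i ∈ Finset.range n, (v i - u i)) < ε / (2 * (Mf * Mg + 1)) :=
      hlen.trans_le (min_le_right _ _)
    have hterm : ∀ i ∈ Finset.range n, |Z (v i) - Z (u i)|
        ≤ |W (v i) - W (u i)| + Mf * Mg * (v i - u i) := by
      intro i hi
      have hi' := Finset.mem_range.mp hi
      obtain ⟨h1, h2, h3⟩ := hfam i hi'
      have hui : u i ∈ Set.Icc c d := ⟨h1, h2.trans h3⟩
      have hvi : v i ∈ Set.Icc c d := ⟨h1.trans h2, h3⟩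
      have hΦi := hΦlip (u i) hui (v i) hvi
      rw [abs_of_nonneg (by linarith : (0:ℝ) ≤ v i - u i)] at hΦi
      have habs : |Z (v i) - Z (u i)| ≤ |W (v i) - W (u i)| + |Φ (v i) - Φ (u i)| := by
        rw [hZ]
        show |(W (v i) - Φ (v i)) - (W (u i) - Φ (u i))| ≤ _
        have : (W (v i) - Φ (v i)) - (W (u i) - Φ (u i))
            = (W (v i) - W (u i)) - (Φ (v i) - Φ (u i)) := by ring
        rw [this]
        exact abs_sub _ _
      linarith
    have hsum : (∑ i ∈ Finset.range n, |Z (v i) - Z (u i)|)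
        ≤ (∑ i ∈ Finset.range n, |W (v i) - W (u i)|)
          + Mf * Mg * ∑ i ∈ Finset.range n, (v i - u i) := by
      rw [Finset.mul_sum, ← Finset.sum_add_distrib]
      exact Finset.sum_le_sum hterm
    have hnn : (0:ℝ) ≤ ∑ i ∈ Finset.range n, (v i - u i) := by
      apply Finset.sum_nonneg
      intro i hi
      obtain ⟨_, h2, _⟩ := hfam i (Finset.mem_range.mp hi)
      linarith
    have hstep : Mf * Mg * (∑ i ∈ Finset.range n, (v i - u i))
        ≤ Mf * Mg * (ε / (2 * (Mf * Mg + 1))) :=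
      mul_le_mul_of_nonneg_left (le_of_lt hlen2) (mul_nonneg hMf0 hMg0)
    have hkey : Mf * Mg * (ε / (2 * (Mf * Mg + 1))) < ε / 2 := by
      rw [← mul_div_assoc, div_lt_iff₀ (by positivity : (0:ℝ) < 2 * (Mf * Mg + 1))]
      nlinarith [mul_nonneg hMf0 hMg0]
    linarith [hsum, hWsum, hstep, hkey]
  -- Z has zero derivative a.e.
  have hZ' : ∀ᵐ t ∂MeasureTheory.volume, t ∈ Set.Icc c d →
      HasDerivWithinAt Z 0 (Set.Icc c d) t := by
    filter_upwards [hG', hφc, hEae] with t hG't hφct hEt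
    intro htIcc
    have hWd : HasDerivWithinAt W (φ t) (Set.Icc c d) t := by
      by_cases hgt : g t = 0
      · have hφt0 : φ t = 0 := by rw [hφ]; show f (G t) * g t = 0; rw [hgt, mul_zero]
        rw [hφt0, hasDerivWithinAt_iff_isLittleO]
        simp only [smul_zero, sub_zero]
        have hGd := hG't htIcc
        rw [hgt] at hGd
        have h1 : (fun s => G s - G t) =o[nhdsWithin t (Set.Icc c d)] fun s => s - t := by
          have := hasDerivWithinAt_iff_isLittleO.mp hGd
          simpa using this
        have h2 : (fun s => W s - W t) =O[nhdsWithin t (Set.Icc c d)]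
            fun s => G s - G t := by
          apply Asymptotics.IsBigO.of_bound Mf
          filter_upwards [self_mem_nhdsWithin] with s hs
          rw [Real.norm_eq_abs, Real.norm_eq_abs]
          exact hHlip (G t) (hmap htIcc) (G s) (hmap hs)
        exact h2.trans_isLittleO h1
      · have hder := hG't htIcc
        have hGt : G t ∈ Set.Icc a b := hmap htIcc
        have hfGt : ContinuousWithinAt f (Set.Icc a b) (G t) := by
          by_contra hc
          exact hEt ⟨htIcc, hder, hgt, ⟨hGt, hc⟩⟩
        have hHd : HasDerivWithinAt H (f (G t)) (Set.Icc a b) (G t) :=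
          Varberg.hasDerivWithinAt_primitive hfInt hGt hfGt
        exact HasDerivWithinAt.comp t hHd hder hmap
    have hΦd : HasDerivWithinAt Φ (φ t) (Set.Icc c d) t :=
      Varberg.hasDerivWithinAt_primitive hφInt htIcc (hφct htIcc)
    have := hWd.sub hΦd
    rw [sub_self] at this
    exact this
  have hZdc := Varberg.eq_of_ac_deriv_zero hcd hZAC hZ'
  have hWd_c : W d - W c = ∫ t in c..d, φ t := by
    have hΦc : Φ c = 0 := intervalIntegral.integral_same
    have hΦd2 : Φ d = ∫ t in c..d, φ t := rfl
    have : W d - Φ d = W c - Φ c := hZdc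
    rw [hΦc, hΦd2] at this
    linarith
  refine ⟨hRiemannφ, ?_⟩
  have h1 : riemannIntegral (fun t => f (G t) * g t) c d = ∫ t in c..d, φ t := by
    rw [riemannIntegral, if_pos hcd]
    exact hφl
  have hGc : G c ∈ Set.Icc a b := hmap ⟨le_rfl, hcd⟩
  have hGd : G d ∈ Set.Icc a b := hmap ⟨hcd, le_rfl⟩
  have h2 : (∫ s in (G c)..(G d), f s) = H (G d) - H (G c) :=
    (hsplitH (G c) hGc (G d) hGd).symm
  have h3 : riemannIntegral f (G c) (G d) = ∫ s in (G c)..(G d), f s := by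
    by_cases hGcd : G c ≤ G d
    · rw [riemannIntegral, if_pos hGcd]
      have hsub : Set.Icc (G c) (G d) ⊆ Set.Icc a b := Set.Icc_subset_Icc hGc.1 hGd.2
      have hMsub : ∀ x ∈ Set.Icc (G c) (G d), |f x| ≤ Mf := fun x hx => hMf x (hsub hx)
      have hcsub : ∀ᵐ x ∂MeasureTheory.volume, x ∈ Set.Icc (G c) (G d) →
          ContinuousWithinAt f (Set.Icc (G c) (G d)) x := by
        filter_upwards [hfc] with x hx hxm
        exact (hx (hsub hxm)).mono hsub
      obtain ⟨_, hl, _⟩ := Varberg.darboux_eq hGcd hMsub hcsub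
      exact hl
    · push_neg at hGcd
      rw [riemannIntegral, if_neg (not_le.mpr hGcd)]
      have hsub : Set.Icc (G d) (G c) ⊆ Set.Icc a b := Set.Icc_subset_Icc hGd.1 hGc.2
      have hMsub : ∀ x ∈ Set.Icc (G d) (G c), |f x| ≤ Mf := fun x hx => hMf x (hsub hx)
      have hcsub : ∀ᵐ x ∂MeasureTheory.volume, x ∈ Set.Icc (G d) (G c) →
          ContinuousWithinAt f (Set.Icc (G d) (G c)) x := by
        filter_upwards [hfc] with x hx hxm
        exact (hx (hsub hxm)).mono hsub
      obtain ⟨_, hl, _⟩ := Varberg.darboux_eq (le_of_lt hGcd) hMsub hcsub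
      rw [hl, ← intervalIntegral.integral_symm]
  rw [h3, h2, h1, ← hWd_c]
end
end

section
/- (Terëkhina's Theorem) Let f : [a,b] → ℝ be Riemann integrable on [a,b], and let G : [c,d] → ℝ be differentiable on [c,d] with Riemann integrable derivative G' on [c,d], with G([c,d]) ⊂ [a,b], G(c) = a and G(d) = b. Then the function t ↦ f(G(t)) G'(t) is Riemann integrable on [c,d] and ∫_a^b f(x) dx = ∫_c^d f(G(t)) G'(t) dt. -/
noncomputable section

open MeasureTheory Set Filter

namespace IsPartition

variable {φ : ℝ → ℝ} {u v : ℝ} {n : ℕ} {x : ℕ → ℝ}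

theorem le (h : IsPartition u v n x) {i j : ℕ} (hij : i ≤ j) (hj : j ≤ n) :
    x i ≤ x j := by
  induction j with
  | zero => interval_cases i; rfl
  | succ k ih =>
    rcases Nat.eq_or_lt_of_le hij with rfl | hlt
    · rfl
    · exact le_trans (ih (Nat.lt_succ_iff.mp hlt) (le_trans (Nat.le_succ k) hj))
        (le_of_lt (h.2.2 k (Nat.lt_of_succ_le hj)))

theorem uv (h : IsPartition u v n x) : u ≤ v := by
  rw [← h.1, ← h.2.1]; exact h.le (Nat.zero_le n) le_rfl

theorem mem (h : IsPartition u v n x) {i : ℕ} (hi : i ≤ n) : x i ∈ Icc u v :=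
  ⟨h.1 ▸ h.le (Nat.zero_le i) hi, h.2.1 ▸ h.le hi le_rfl⟩

theorem cell_subset (h : IsPartition u v n x) {i : ℕ} (hi : i < n) :
    Icc (x i) (x (i + 1)) ⊆ Icc u v :=
  Icc_subset_Icc (h.mem hi.le).1 (h.mem hi).2

theorem n_eq_zero (h : IsPartition u u n x) : n = 0 := by
  by_contra hn
  have h1 : x 0 < x n :=
    lt_of_lt_of_le (h.2.2 0 (Nat.pos_of_ne_zero hn)) (h.le (Nat.pos_of_ne_zero hn) le_rfl)
  rw [h.1, h.2.1] at h1; exact lt_irrefl _ h1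

/-- a trivial partition -/
theorem exists_partition (huv : u ≤ v) : ∃ n x, IsPartition u v n x := by
  rcases eq_or_lt_of_le huv with rfl | hlt
  · exact ⟨0, fun _ => u, rfl, rfl, by omega⟩
  · refine ⟨1, fun i => if i = 0 then u else v, by simp, by simp, ?_⟩
    intro i hi
    interval_cases i
    simpa using hlt

/-- the cell containing a point of `[u, v)` -/
theorem exists_cell (h : IsPartition u v n x) {t : ℝ} (ht : t ∈ Ico u v) :
    ∃ i < n, t ∈ Ico (x i) (x (i + 1)) := by
  classical
  have hn : n ≠ 0 := by
    rintro rfl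
    rw [← h.1, ← h.2.1] at ht
    exact absurd ht.1 (not_le.mpr ht.2)
  have h0 : x 0 ≤ t := h.1 ▸ ht.1
  obtain ⟨i, hidef⟩ : ∃ i, i = @Nat.findGreatest (fun j => x j ≤ t)
      (fun j => Real.decidableLE (x j) t) n := ⟨_, rfl⟩
  have hle : x i ≤ t := by rw [hidef]; exact @Nat.findGreatest_spec 0 (fun j => x j ≤ t) (fun j => Real.decidableLE (x j) t) n (Nat.zero_le n) h0
  have hin : i ≤ n := by rw [hidef]; exact @Nat.findGreatest_le (fun j => x j ≤ t) (fun j => Real.decidableLE (x j) t) n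
  have hiln : i < n := by
    rcases eq_or_lt_of_le hin with heq | hlt
    · exfalso
      rw [heq] at hle
      rw [h.2.1] at hle
      exact absurd hle (not_le.mpr ht.2)
    · exact hlt
  refine ⟨i, hiln, hle, ?_⟩
  by_contra hc
  push_neg at hc
  have h2 := @Nat.le_findGreatest (i+1) (fun j => x j ≤ t) (fun j => Real.decidableLE (x j) t) n
    (Nat.succ_le_of_lt hiln) hc
  rw [← hidef] at h2; omega

theorem cells_disjoint (h : IsPartition u v n x) {i j : ℕ} (hi : i < n) (hj : j < n)
    (hne : j ≠ i) {t : ℝ} (hti : t ∈ Ico (x i) (x (i + 1))) : t ∉ Ico (x j) (x (j + 1)) := by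
  intro htj
  rcases lt_or_gt_of_ne hne with hlt | hgt
  · exact absurd (lt_of_lt_of_le htj.2 (h.le hlt hi.le)) (not_lt.mpr hti.1)
  · exact absurd (lt_of_lt_of_le hti.2 (h.le hgt hj.le)) (not_lt.mpr htj.1)

/-- step function with value `g i` on cell `i` -/
noncomputable def stepFn (g : ℕ → ℝ) (n : ℕ) (x : ℕ → ℝ) (t : ℝ) : ℝ :=
  ∑ i ∈ Finset.range n, (Ico (x i) (x (i + 1))).indicator (fun _ => g i) t

theorem stepFn_measurable (g : ℕ → ℝ) : Measurable (stepFn g n x) := by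
  unfold stepFn
  exact Finset.measurable_sum _ fun i _ =>
    Measurable.indicator measurable_const measurableSet_Ico

theorem stepFn_eval (h : IsPartition u v n x) (g : ℕ → ℝ) {i : ℕ} (hi : i < n) {t : ℝ}
    (ht : t ∈ Ico (x i) (x (i + 1))) : stepFn g n x t = g i := by
  rw [stepFn, Finset.sum_eq_single i]
  · simp [indicator_of_mem ht]
  · intro j hj hne
    exact indicator_of_notMem (h.cells_disjoint hi (Finset.mem_range.mp hj) hne ht) _
  · intro hc; exact absurd (Finset.mem_range.mpr hi) hc

theorem stepFn_zero (h : IsPartition u v n x) (g : ℕ → ℝ) {t : ℝ} (ht : t ∉ Ico u v) :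
    stepFn g n x t = 0 := by
  rw [stepFn]
  refine Finset.sum_eq_zero fun i hi => indicator_of_notMem (fun hmem => ht ?_) _
  have hi' := Finset.mem_range.mp hi
  exact ⟨le_trans (h.mem hi'.le).1 hmem.1, lt_of_lt_of_le hmem.2 (h.mem hi').2⟩

theorem stepFn_bound (h : IsPartition u v n x) {g : ℕ → ℝ} {M : ℝ} (hM : 0 ≤ M)
    (hg : ∀ i < n, |g i| ≤ M) (t : ℝ) : |stepFn g n x t| ≤ M := by
  by_cases ht : t ∈ Ico u v
  · obtain ⟨i, hi, hti⟩ := h.exists_cell ht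
    rw [stepFn_eval h g hi hti]; exact hg i hi
  · rw [stepFn_zero h g ht]; simpa using hM

theorem stepFn_integrable (h : IsPartition u v n x) (g : ℕ → ℝ) :
    Integrable (stepFn g n x) := by
  unfold stepFn
  refine integrable_finset_sum _ fun i _ => ?_
  rw [integrable_indicator_iff measurableSet_Ico]
  exact integrableOn_const (by rw [Real.volume_Ico]; exact ENNReal.ofReal_ne_top)

theorem stepFn_integral (h : IsPartition u v n x) (g : ℕ → ℝ) :
    ∫ t, stepFn g n x t = ∑ i ∈ Finset.range n, g i * (x (i + 1) - x i) := by
  unfold stepFn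
  rw [integral_finset_sum]
  · refine Finset.sum_congr rfl fun i hi => ?_
    rw [integral_indicator_const _ measurableSet_Ico, smul_eq_mul,
      Real.volume_real_Ico_of_le (by linarith [(h.2.2 i (Finset.mem_range.mp hi)).le]), mul_comm]
  · intro i _
    rw [integrable_indicator_iff measurableSet_Ico]
    exact integrableOn_const (by rw [Real.volume_Ico]; exact ENNReal.ofReal_ne_top)

/-- value of lower step function -/
noncomputable def cellInf (φ : ℝ → ℝ) (x : ℕ → ℝ) (i : ℕ) : ℝ := sInf (φ '' Icc (x i) (x (i + 1)))

noncomputable def cellSup (φ : ℝ → ℝ) (x : ℕ → ℝ) (i : ℕ) : ℝ := sSup (φ '' Icc (x i) (x (i + 1)))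

variable {M : ℝ}

theorem cell_nonempty (h : IsPartition u v n x) {i : ℕ} (hi : i < n) :
    (φ '' Icc (x i) (x (i + 1))).Nonempty :=
  (nonempty_Icc.mpr (h.2.2 i hi).le).image φ

theorem cell_bddAbove (h : IsPartition u v n x) (hM : ∀ t ∈ Icc u v, |φ t| ≤ M) {i : ℕ}
    (hi : i < n) : BddAbove (φ '' Icc (x i) (x (i + 1))) := by
  refine ⟨M, ?_⟩
  rintro y ⟨t, ht, rfl⟩
  exact (abs_le.mp (hM t (h.cell_subset hi ht))).2

theorem cell_bddBelow (h : IsPartition u v n x) (hM : ∀ t ∈ Icc u v, |φ t| ≤ M) {i : ℕ}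
    (hi : i < n) : BddBelow (φ '' Icc (x i) (x (i + 1))) := by
  refine ⟨-M, ?_⟩
  rintro y ⟨t, ht, rfl⟩
  exact (abs_le.mp (hM t (h.cell_subset hi ht))).1

theorem cellInf_le (h : IsPartition u v n x) (hM : ∀ t ∈ Icc u v, |φ t| ≤ M) {i : ℕ}
    (hi : i < n) {t : ℝ} (ht : t ∈ Icc (x i) (x (i + 1))) : cellInf φ x i ≤ φ t :=
  csInf_le (h.cell_bddBelow hM hi) ⟨t, ht, rfl⟩

theorem le_cellSup (h : IsPartition u v n x) (hM : ∀ t ∈ Icc u v, |φ t| ≤ M) {i : ℕ}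
    (hi : i < n) {t : ℝ} (ht : t ∈ Icc (x i) (x (i + 1))) : φ t ≤ cellSup φ x i :=
  le_csSup (h.cell_bddAbove hM hi) ⟨t, ht, rfl⟩

theorem abs_cellInf_le (h : IsPartition u v n x) (hM : ∀ t ∈ Icc u v, |φ t| ≤ M) {i : ℕ}
    (hi : i < n) : |cellInf φ x i| ≤ M := by
  have hxi : x i ∈ Icc (x i) (x (i + 1)) := ⟨le_rfl, (h.2.2 i hi).le⟩
  rw [abs_le]
  constructor
  · refine le_csInf (h.cell_nonempty hi) ?_
    rintro y ⟨s, hs, rfl⟩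
    exact (abs_le.mp (hM s (h.cell_subset hi hs))).1
  · exact le_trans (h.cellInf_le hM hi hxi) (abs_le.mp (hM _ (h.cell_subset hi hxi))).2

theorem abs_cellSup_le (h : IsPartition u v n x) (hM : ∀ t ∈ Icc u v, |φ t| ≤ M) {i : ℕ}
    (hi : i < n) : |cellSup φ x i| ≤ M := by
  have hxi : x i ∈ Icc (x i) (x (i + 1)) := ⟨le_rfl, (h.2.2 i hi).le⟩
  rw [abs_le]
  constructor
  · exact le_trans (abs_le.mp (hM _ (h.cell_subset hi hxi))).1 (h.le_cellSup hM hi hxi)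
  · refine csSup_le (h.cell_nonempty hi) ?_
    rintro y ⟨s, hs, rfl⟩
    exact (abs_le.mp (hM s (h.cell_subset hi hs))).2

theorem stepL_le (h : IsPartition u v n x) (hM : ∀ t ∈ Icc u v, |φ t| ≤ M) {t : ℝ}
    (ht : t ∈ Ico u v) : stepFn (cellInf φ x) n x t ≤ φ t := by
  obtain ⟨i, hi, hti⟩ := h.exists_cell ht
  rw [stepFn_eval h _ hi hti]
  exact h.cellInf_le hM hi ⟨hti.1, hti.2.le⟩

theorem le_stepU (h : IsPartition u v n x) (hM : ∀ t ∈ Icc u v, |φ t| ≤ M) {t : ℝ}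
    (ht : t ∈ Ico u v) : φ t ≤ stepFn (cellSup φ x) n x t := by
  obtain ⟨i, hi, hti⟩ := h.exists_cell ht
  rw [stepFn_eval h _ hi hti]
  exact h.le_cellSup hM hi ⟨hti.1, hti.2.le⟩

theorem stepL_integral (h : IsPartition u v n x) :
    ∫ t, stepFn (cellInf φ x) n x t = lowerSum φ n x := stepFn_integral h _

theorem stepU_integral (h : IsPartition u v n x) :
    ∫ t, stepFn (cellSup φ x) n x t = upperSum φ n x := stepFn_integral h _

theorem sum_cells (h : IsPartition u v n x) :
    ∑ i ∈ Finset.range n, (x (i + 1) - x i) = v - u := by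
  rw [Finset.sum_range_sub (f := x), h.1, h.2.1]

theorem lowerSum_le_M (h : IsPartition u v n x) (hM : ∀ t ∈ Icc u v, |φ t| ≤ M) :
    lowerSum φ n x ≤ M * (v - u) := by
  rw [lowerSum, ← h.sum_cells, Finset.mul_sum]
  refine Finset.sum_le_sum fun i hi => ?_
  have hi' := Finset.mem_range.mp hi
  have := (abs_le.mp (h.abs_cellInf_le (φ := φ) hM hi')).2
  have hΔ : (0:ℝ) ≤ x (i+1) - x i := by linarith [(h.2.2 i hi').le]
  exact mul_le_mul_of_nonneg_right this hΔ

theorem neg_M_le_upperSum (h : IsPartition u v n x) (hM : ∀ t ∈ Icc u v, |φ t| ≤ M) :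
    -M * (v - u) ≤ upperSum φ n x := by
  rw [upperSum, ← h.sum_cells, Finset.mul_sum]
  refine Finset.sum_le_sum fun i hi => ?_
  have hi' := Finset.mem_range.mp hi
  have := (abs_le.mp (h.abs_cellSup_le (φ := φ) hM hi')).1
  have hΔ : (0:ℝ) ≤ x (i+1) - x i := by linarith [(h.2.2 i hi').le]
  exact mul_le_mul_of_nonneg_right this hΔ

end IsPartition

section Darboux

variable {φ : ℝ → ℝ} {u v M : ℝ}

def lowerSet (φ : ℝ → ℝ) (u v : ℝ) : Set ℝ :=
  {s : ℝ | ∃ n x, IsPartition u v n x ∧ s = lowerSum φ n x}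

def upperSet (φ : ℝ → ℝ) (u v : ℝ) : Set ℝ :=
  {s : ℝ | ∃ n x, IsPartition u v n x ∧ s = upperSum φ n x}

theorem lowerDarboux_eq : lowerDarboux φ u v = sSup (lowerSet φ u v) := rfl
theorem upperDarboux_eq : upperDarboux φ u v = sInf (upperSet φ u v) := rfl

theorem lowerSet_nonempty (huv : u ≤ v) : (lowerSet φ u v).Nonempty := by
  obtain ⟨n, x, h⟩ := IsPartition.exists_partition (u := u) (v := v) huv
  exact ⟨_, n, x, h, rfl⟩

theorem upperSet_nonempty (huv : u ≤ v) : (upperSet φ u v).Nonempty := by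
  obtain ⟨n, x, h⟩ := IsPartition.exists_partition (u := u) (v := v) huv
  exact ⟨_, n, x, h, rfl⟩

theorem lowerSet_bddAbove (hM : ∀ t ∈ Icc u v, |φ t| ≤ M) : BddAbove (lowerSet φ u v) := by
  refine ⟨M * (v - u), ?_⟩
  rintro s ⟨n, x, h, rfl⟩
  exact h.lowerSum_le_M hM

theorem upperSet_bddBelow (hM : ∀ t ∈ Icc u v, |φ t| ≤ M) : BddBelow (upperSet φ u v) := by
  refine ⟨-M * (v - u), ?_⟩
  rintro s ⟨n, x, h, rfl⟩
  exact h.neg_M_le_upperSum hM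

theorem lowerSum_le_lowerDarboux (hM : ∀ t ∈ Icc u v, |φ t| ≤ M) {n : ℕ} {x : ℕ → ℝ}
    (h : IsPartition u v n x) : lowerSum φ n x ≤ lowerDarboux φ u v :=
  le_csSup (lowerSet_bddAbove hM) ⟨n, x, h, rfl⟩

theorem upperDarboux_le_upperSum (hM : ∀ t ∈ Icc u v, |φ t| ≤ M) {n : ℕ} {x : ℕ → ℝ}
    (h : IsPartition u v n x) : upperDarboux φ u v ≤ upperSum φ n x :=
  csInf_le (upperSet_bddBelow hM) ⟨n, x, h, rfl⟩

theorem lowerDarboux_self : lowerDarboux φ u u = 0 := by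
  have : lowerSet φ u u = {0} := by
    ext s
    constructor
    · rintro ⟨n, x, h, rfl⟩
      have := h.n_eq_zero
      subst this
      simp [lowerSum]
    · rintro rfl
      exact ⟨0, fun _ => u, ⟨rfl, rfl, by omega⟩, by simp [lowerSum]⟩
  rw [lowerDarboux_eq, this, csSup_singleton]

theorem upperDarboux_self : upperDarboux φ u u = 0 := by
  have : upperSet φ u u = {0} := by
    ext s
    constructor
    · rintro ⟨n, x, h, rfl⟩
      have := h.n_eq_zero
      subst this
      simp [upperSum]
    · rintro rfl
      exact ⟨0, fun _ => u, ⟨rfl, rfl, by omega⟩, by simp [upperSum]⟩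
  rw [upperDarboux_eq, this, csInf_singleton]

end Darboux

section BridgeA

open IsPartition

variable {φ : ℝ → ℝ} {u v M : ℝ}

theorem bridgeA (huv : u ≤ v) (hM : ∀ t ∈ Icc u v, |φ t| ≤ M)
    (heq : lowerDarboux φ u v = upperDarboux φ u v) :
    IntegrableOn φ (Icc u v) volume ∧
    (∫ t in Icc u v, φ t) = lowerDarboux φ u v ∧
    ∀ᵐ t, t ∈ Ioo u v → ContinuousWithinAt φ (Icc u v) t := by
  have hM0 : 0 ≤ M := le_trans (abs_nonneg _) (hM u ⟨le_rfl, huv⟩)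
  set I := lowerDarboux φ u v with hI
  have hexL : ∀ k : ℕ, ∃ nx : ℕ × (ℕ → ℝ), IsPartition u v nx.1 nx.2 ∧
      I - (1/2)^k < lowerSum φ nx.1 nx.2 := by
    intro k
    have hlt : I - (1/2)^k < sSup (lowerSet φ u v) := by
      rw [← lowerDarboux_eq, ← hI]
      have : (0:ℝ) < (1/2)^k := by positivity
      linarith
    obtain ⟨s, ⟨n, x, hP, rfl⟩, hs⟩ := exists_lt_of_lt_csSup (lowerSet_nonempty huv) hlt
    exact ⟨⟨n, x⟩, hP, hs⟩
  have hexU : ∀ k : ℕ, ∃ nx : ℕ × (ℕ → ℝ), IsPartition u v nx.1 nx.2 ∧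
      upperSum φ nx.1 nx.2 < I + (1/2)^k := by
    intro k
    have hlt : sInf (upperSet φ u v) < I + (1/2)^k := by
      rw [← upperDarboux_eq, ← heq]
      have : (0:ℝ) < (1/2)^k := by positivity
      linarith
    obtain ⟨s, ⟨n, x, hP, rfl⟩, hs⟩ := exists_lt_of_csInf_lt (upperSet_nonempty huv) hlt
    exact ⟨⟨n, x⟩, hP, hs⟩
  choose PL hPL hL using hexL
  choose PU hPU hU using hexU
  set ℓ : ℕ → ℝ → ℝ := fun k => stepFn (cellInf φ (PL k).2) (PL k).1 (PL k).2 with hℓ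
  set 𝓊 : ℕ → ℝ → ℝ := fun k => stepFn (cellSup φ (PU k).2) (PU k).1 (PU k).2 with h𝓊
  set g : ℕ → ℝ → ℝ := fun k t => 𝓊 k t - ℓ k t with hg
  have hstep : ∀ k, ∀ t ∈ Ico u v, ℓ k t ≤ φ t ∧ φ t ≤ 𝓊 k t := fun k t ht =>
    ⟨(hPL k).stepL_le hM ht, (hPU k).le_stepU hM ht⟩
  have hzero : ∀ k, ∀ t, t ∉ Ico u v → ℓ k t = 0 ∧ 𝓊 k t = 0 := fun k t ht =>
    ⟨(hPL k).stepFn_zero _ ht, (hPU k).stepFn_zero _ ht⟩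
  have hg0 : ∀ k t, 0 ≤ g k t := by
    intro k t
    by_cases ht : t ∈ Ico u v
    · have := hstep k t ht; simp only [hg]; linarith [this.1, this.2]
    · simp [hg, (hzero k t ht).1, (hzero k t ht).2]
  have hgmeas : ∀ k, Measurable (g k) := fun k =>
    ((stepFn_measurable _).sub (stepFn_measurable _))
  have hℓint : ∀ k, Integrable (ℓ k) := fun k => (hPL k).stepFn_integrable _
  have h𝓊int : ∀ k, Integrable (𝓊 k) := fun k => (hPU k).stepFn_integrable _
  have hgint : ∀ k, Integrable (g k) := fun k => (h𝓊int k).sub (hℓint k)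
  have hLle : ∀ k, lowerSum φ (PL k).1 (PL k).2 ≤ I := fun k =>
    lowerSum_le_lowerDarboux hM (hPL k)
  have hUge : ∀ k, I ≤ upperSum φ (PU k).1 (PU k).2 := fun k =>
    heq ▸ upperDarboux_le_upperSum hM (hPU k)
  have hgI : ∀ k, ∫ t, g k t ≤ 2 * (1/2)^k := by
    intro k
    have heval : ∫ t, g k t = upperSum φ (PU k).1 (PU k).2 - lowerSum φ (PL k).1 (PL k).2 := by
      simp only [hg, hℓ, h𝓊]
      rw [integral_sub ((hPU k).stepFn_integrable _) ((hPL k).stepFn_integrable _),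
        (hPU k).stepU_integral, (hPL k).stepL_integral]
    rw [heval]
    linarith [hL k, hU k]
  have hsum : ∑' k, ∫⁻ t, ENNReal.ofReal (g k t) ≠ ⊤ := by
    have hb : ∀ k, ∫⁻ t, ENNReal.ofReal (g k t) ≤ ENNReal.ofReal (2 * (1/2)^k) := by
      intro k
      rw [← ofReal_integral_eq_lintegral_ofReal (hgint k)
        (Filter.Eventually.of_forall (hg0 k))]
      exact ENNReal.ofReal_le_ofReal (hgI k)
    refine ne_top_of_le_ne_top ?_ (ENNReal.tsum_le_tsum hb)
    rw [← ENNReal.ofReal_tsum_of_nonneg (fun k => by positivity)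
      (summable_geometric_two.mul_left 2)]
    exact ENNReal.ofReal_ne_top
  have haegap : ∀ᵐ t, Filter.Tendsto (fun k => g k t) Filter.atTop (nhds 0) := by
    have hlt : ∫⁻ t, ∑' k, ENNReal.ofReal (g k t) ≠ ⊤ := by
      rw [lintegral_tsum (fun k => ((hgmeas k).ennreal_ofReal).aemeasurable)]
      exact hsum
    have hmeas : Measurable fun t => ∑' k, ENNReal.ofReal (g k t) :=
      Measurable.ennreal_tsum fun k => (hgmeas k).ennreal_ofReal
    filter_upwards [ae_lt_top hmeas hlt] with t ht
    have h1 : Filter.Tendsto (fun k => ENNReal.ofReal (g k t)) Filter.atTop (nhds 0) :=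
      ENNReal.tendsto_atTop_zero_of_tsum_ne_top ht.ne
    have h2 := (ENNReal.tendsto_toReal (by simp)).comp h1
    simp only [Function.comp_def, ENNReal.toReal_zero] at h2
    refine h2.congr fun k => ?_
    exact ENNReal.toReal_ofReal (hg0 k t)
  set φ' : ℝ → ℝ := (Ico u v).indicator φ with hφ'
  have hconv : ∀ᵐ t, Filter.Tendsto (fun k => ℓ k t) Filter.atTop (nhds (φ' t)) := by
    filter_upwards [haegap] with t ht
    by_cases htm : t ∈ Ico u v
    · rw [hφ', indicator_of_mem htm]
      have hsq : Filter.Tendsto (fun k => ℓ k t - φ t) Filter.atTop (nhds 0) := by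
        refine squeeze_zero_norm (fun k => ?_) ht
        have h1 := (hstep k t htm).1
        have h2 := (hstep k t htm).2
        rw [Real.norm_eq_abs, abs_le]
        refine ⟨?_, ?_⟩ <;> simp only [hg] <;> linarith
      have := hsq.add_const (φ t)
      simpa using this
    · rw [hφ', indicator_of_notMem htm]
      have hz : ∀ k, ℓ k t = 0 := fun k => (hzero k t htm).1
      simp only [hz]
      exact tendsto_const_nhds
  have hφ'meas : AEStronglyMeasurable φ' volume :=
    aestronglyMeasurable_of_tendsto_ae Filter.atTop
      (fun k => (stepFn_measurable _).aestronglyMeasurable) hconv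
  set bound : ℝ → ℝ := (Icc u v).indicator (fun _ => M) with hbound
  have hboundint : Integrable bound := by
    rw [hbound, integrable_indicator_iff measurableSet_Icc]
    exact integrableOn_const (by rw [Real.volume_Icc]; exact ENNReal.ofReal_ne_top)
  have hℓbd : ∀ k, ∀ t, ‖ℓ k t‖ ≤ bound t := by
    intro k t
    by_cases htm : t ∈ Ico u v
    · rw [hbound, indicator_of_mem (Ico_subset_Icc_self htm), Real.norm_eq_abs]
      exact (hPL k).stepFn_bound hM0 (fun i hi => (hPL k).abs_cellInf_le hM hi) t
    · rw [(hzero k t htm).1, hbound]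
      by_cases h2 : t ∈ Icc u v
      · rw [indicator_of_mem h2]; simpa using hM0
      · rw [indicator_of_notMem h2]; simp
  have hφ'bd : ∀ t, ‖φ' t‖ ≤ bound t := by
    intro t
    by_cases htm : t ∈ Ico u v
    · rw [hφ', hbound, indicator_of_mem htm, indicator_of_mem (Ico_subset_Icc_self htm),
        Real.norm_eq_abs]
      exact hM t (Ico_subset_Icc_self htm)
    · rw [hφ', indicator_of_notMem htm, hbound]
      by_cases h2 : t ∈ Icc u v
      · rw [indicator_of_mem h2]; simpa using hM0
      · rw [indicator_of_notMem h2]; simp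
  have hDCT : Filter.Tendsto (fun k => ∫ t, ℓ k t) Filter.atTop (nhds (∫ t, φ' t)) :=
    tendsto_integral_of_dominated_convergence bound
      (fun k => (stepFn_measurable _).aestronglyMeasurable) hboundint
      (fun k => Filter.Eventually.of_forall (hℓbd k)) hconv
  have hLtend : Filter.Tendsto (fun k => ∫ t, ℓ k t) Filter.atTop (nhds I) := by
    have heval : (fun k => ∫ t, ℓ k t) = fun k => lowerSum φ (PL k).1 (PL k).2 :=
      funext fun k => (hPL k).stepL_integral
    rw [heval]
    have hlow : Filter.Tendsto (fun k : ℕ => I - (1/2:ℝ)^k) Filter.atTop (nhds I) := by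
      have h2 : Filter.Tendsto (fun k : ℕ => (1/2:ℝ)^k) Filter.atTop (nhds 0) :=
        tendsto_pow_atTop_nhds_zero_of_lt_one (by norm_num) (by norm_num)
      simpa using (tendsto_const_nhds (x := I) (f := Filter.atTop (α := ℕ))).sub h2
    exact tendsto_of_tendsto_of_tendsto_of_le_of_le hlow tendsto_const_nhds
      (fun k => (hL k).le) (fun k => hLle k)
  have hφ'I : ∫ t, φ' t = I := tendsto_nhds_unique hDCT hLtend
  have hφ'int : Integrable φ' :=
    Integrable.mono' hboundint hφ'meas (Filter.Eventually.of_forall hφ'bd)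
  have hdiff : φ =ᶠ[ae (volume.restrict (Icc u v))] φ' := by
    rw [Filter.EventuallyEq, ae_restrict_iff' measurableSet_Icc, ae_iff]
    refine measure_mono_null ?_ (Real.volume_singleton (a := v))
    intro t ht
    simp only [mem_setOf_eq, not_forall] at ht
    obtain ⟨htcc, hne⟩ := ht
    by_contra hv
    refine hne ?_
    rw [hφ', indicator_of_mem (Set.mem_Ico.mpr
      ⟨htcc.1, lt_of_le_of_ne htcc.2 (fun h => hv (mem_singleton_iff.mpr h))⟩)]
  have hIntOn : IntegrableOn φ (Icc u v) volume :=
    (hφ'int.restrict (s := Icc u v)).congr hdiff.symm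
  have hval : ∫ t in Icc u v, φ t = I := by
    rw [integral_congr_ae hdiff, ← integral_indicator measurableSet_Icc,
      Set.indicator_eq_self.2 (subset_trans Set.support_indicator_subset Ico_subset_Icc_self)]
    exact hφ'I
  refine ⟨hIntOn, hval, ?_⟩
  have hnull : volume (⋃ k : ℕ, ((PL k).2 '' Iic (PL k).1 ∪ (PU k).2 '' Iic (PU k).1)) = 0 :=
    measure_iUnion_null fun k => measure_union_null
      (Set.Finite.measure_zero ((Set.finite_Iic _).image _) _)
      (Set.Finite.measure_zero ((Set.finite_Iic _).image _) _)
  filter_upwards [haegap, measure_eq_zero_iff_ae_notMem.mp hnull] with t hgap hnmem htIoo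
  rw [Metric.continuousWithinAt_iff]
  intro ε hε
  obtain ⟨k, hk⟩ := (hgap.eventually (gt_mem_nhds hε)).exists
  have htIco : t ∈ Ico u v := ⟨htIoo.1.le, htIoo.2⟩
  obtain ⟨i, hi, hti⟩ := (hPL k).exists_cell htIco
  obtain ⟨j, hj, htj⟩ := (hPU k).exists_cell htIco
  have hne1 : (PL k).2 i < t := by
    rcases lt_or_eq_of_le hti.1 with h | h
    · exact h
    · exact absurd (mem_iUnion.mpr ⟨k, Or.inl ⟨i, mem_Iic.mpr hi.le, h⟩⟩) hnmem
  have hne2 : (PU k).2 j < t := by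
    rcases lt_or_eq_of_le htj.1 with h | h
    · exact h
    · exact absurd (mem_iUnion.mpr ⟨k, Or.inr ⟨j, mem_Iic.mpr hj.le, h⟩⟩) hnmem
  set δ := min (min (t - (PL k).2 i) ((PL k).2 (i+1) - t))
    (min (t - (PU k).2 j) ((PU k).2 (j+1) - t)) with hδ
  have hδ0 : 0 < δ := by
    rw [hδ]
    refine lt_min (lt_min ?_ ?_) (lt_min ?_ ?_) <;> linarith [hti.2, htj.2]
  refine ⟨δ, hδ0, ?_⟩
  intro s hs hdist
  rw [Real.dist_eq] at hdist
  have habs := abs_lt.mp hdist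
  have hsL : s ∈ Ico ((PL k).2 i) ((PL k).2 (i+1)) := by
    constructor
    · have : t - (PL k).2 i ≥ δ := by rw [hδ]; exact le_trans (min_le_left _ _) (min_le_left _ _)
      linarith [habs.1]
    · have : (PL k).2 (i+1) - t ≥ δ := by
        rw [hδ]; exact le_trans (min_le_left _ _) (min_le_right _ _)
      linarith [habs.2]
  have hsU : s ∈ Ico ((PU k).2 j) ((PU k).2 (j+1)) := by
    constructor
    · have : t - (PU k).2 j ≥ δ := by rw [hδ]; exact le_trans (min_le_right _ _) (min_le_left _ _)
      linarith [habs.1]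
    · have : (PU k).2 (j+1) - t ≥ δ := by
        rw [hδ]; exact le_trans (min_le_right _ _) (min_le_right _ _)
      linarith [habs.2]
  have hsIco : s ∈ Ico u v := ⟨hs.1, lt_of_lt_of_le hsL.2 ((hPL k).mem hi).2⟩
  have hℓeq : ℓ k s = ℓ k t := by
    simp only [hℓ]
    rw [stepFn_eval (hPL k) _ hi hsL, stepFn_eval (hPL k) _ hi hti]
  have h𝓊eq : 𝓊 k s = 𝓊 k t := by
    simp only [h𝓊]
    rw [stepFn_eval (hPU k) _ hj hsU, stepFn_eval (hPU k) _ hj htj]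
  have hb1 := hstep k s hsIco
  have hb2 := hstep k t htIco
  rw [Real.dist_eq]
  have hgval : 𝓊 k t - ℓ k t = g k t := by simp only [hg]
  refine lt_of_le_of_lt (abs_le.mpr ⟨?_, ?_⟩) hk <;>
    [linarith [hb1.2, hb2.1, hℓeq, h𝓊eq, hgval]; linarith [hb1.1, hb2.2, hℓeq, h𝓊eq, hgval]]

end BridgeA

section BridgeB

open IsPartition

variable {φ : ℝ → ℝ} {u v M : ℝ}

/-- uniform partition -/
noncomputable def unifP (u v : ℝ) (k : ℕ) : ℕ → ℝ := fun i => u + i * (v - u) / (k + 1)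

theorem unifP_isPartition (huv : u < v) (k : ℕ) : IsPartition u v (k + 1) (unifP u v k) := by
  refine ⟨by simp [unifP], ?_, ?_⟩
  · show u + (↑(k+1)) * (v - u) / (k + 1) = v
    have : ((k:ℝ) + 1) ≠ 0 := by positivity
    push_cast
    field_simp
    ring
  · intro i _
    show u + (i:ℝ) * (v - u) / (k + 1) < u + (↑(i+1)) * (v - u) / (k + 1)
    have h1 : (0:ℝ) < (v - u) / (k + 1) := div_pos (sub_pos.mpr huv) (by positivity)
    push_cast
    have h2 : ((i:ℝ) + 1) * (v - u) / (k+1) - (i:ℝ) * (v - u) / (k+1) = (v - u)/(k+1) := by ring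
    linarith

theorem unifP_width (huv : u < v) (k : ℕ) {i : ℕ} :
    unifP u v k (i + 1) - unifP u v k i = (v - u) / (k + 1) := by
  show u + (↑(i+1)) * (v - u) / (k + 1) - (u + (i:ℝ) * (v - u) / (k + 1)) = _
  push_cast
  ring

theorem bridgeB (huv : u ≤ v) (hM : ∀ t ∈ Icc u v, |φ t| ≤ M)
    (hcont : ∀ᵐ t, t ∈ Ioo u v → ContinuousWithinAt φ (Icc u v) t) :
    lowerDarboux φ u v = upperDarboux φ u v ∧
    lowerDarboux φ u v = ∫ t in Icc u v, φ t := by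
  have hM0 : 0 ≤ M := le_trans (abs_nonneg _) (hM u ⟨le_rfl, huv⟩)
  rcases eq_or_lt_of_le huv with rfl | hlt
  · refine ⟨by rw [lowerDarboux_self, upperDarboux_self], ?_⟩
    rw [lowerDarboux_self]
    rw [show Icc u u = {u} from Set.Icc_self u,
      Measure.restrict_eq_zero.mpr Real.volume_singleton, integral_zero_measure]
  -- u < v
  set P : ℕ → ℕ → ℝ := unifP u v with hPdef
  have hPart : ∀ k, IsPartition u v (k + 1) (P k) := fun k => unifP_isPartition hlt k
  set ℓ : ℕ → ℝ → ℝ := fun k => stepFn (cellInf φ (P k)) (k+1) (P k) with hℓ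
  set 𝓊 : ℕ → ℝ → ℝ := fun k => stepFn (cellSup φ (P k)) (k+1) (P k) with h𝓊
  have hstep : ∀ k, ∀ t ∈ Ico u v, ℓ k t ≤ φ t ∧ φ t ≤ 𝓊 k t := fun k t ht =>
    ⟨(hPart k).stepL_le hM ht, (hPart k).le_stepU hM ht⟩
  have hzero : ∀ k, ∀ t, t ∉ Ico u v → ℓ k t = 0 ∧ 𝓊 k t = 0 := fun k t ht =>
    ⟨(hPart k).stepFn_zero _ ht, (hPart k).stepFn_zero _ ht⟩
  have hwidth : Filter.Tendsto (fun k : ℕ => (v - u)/(k + 1)) Filter.atTop (nhds 0) := by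
    have h1 : Filter.Tendsto (fun k : ℕ => 1/((k:ℝ) + 1)) Filter.atTop (nhds 0) :=
      tendsto_one_div_add_atTop_nhds_zero_nat
    have := h1.const_mul (v - u)
    simpa [div_eq_mul_inv, mul_comm] using this
  -- convergence at continuity points
  have hconvpt : ∀ t ∈ Ioo u v, ContinuousWithinAt φ (Icc u v) t →
      Filter.Tendsto (fun k => ℓ k t) Filter.atTop (nhds (φ t)) ∧
      Filter.Tendsto (fun k => 𝓊 k t) Filter.atTop (nhds (φ t)) := by
    intro t htIoo hct
    have htIco : t ∈ Ico u v := ⟨htIoo.1.le, htIoo.2⟩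
    constructor <;>
    · rw [Metric.tendsto_atTop]
      intro ε hε
      obtain ⟨δ, hδ0, hδ⟩ := Metric.continuousWithinAt_iff.mp hct (ε/2) (by linarith)
      obtain ⟨N, hN⟩ := (Metric.tendsto_atTop.mp hwidth δ hδ0).imp (fun N h => h)
      refine ⟨N, fun k hk => ?_⟩
      have hwk : (v - u)/(k+1) < δ := by
        have := hN k hk
        rwa [Real.dist_eq, sub_zero, abs_of_pos (show (0:ℝ) < (v-u)/((k:ℝ)+1) from
          div_pos (sub_pos.mpr hlt) (by positivity))] at this
      obtain ⟨i, hi, hti⟩ := (hPart k).exists_cell htIco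
      have hcell : ∀ s ∈ Icc (P k i) (P k (i+1)), s ∈ Icc u v ∧ |s - t| < δ := by
        intro s hs
        refine ⟨(hPart k).cell_subset hi hs, ?_⟩
        have hw : P k (i+1) - P k i = (v - u)/(k+1) := unifP_width hlt k
        rw [abs_sub_lt_iff]
        constructor
        · linarith [hti.1, hti.2.le, hs.1, hs.2, hw, hwk]
        · linarith [hti.1, hti.2.le, hs.1, hs.2, hw, hwk]
      have hb1 : ∀ s ∈ Icc (P k i) (P k (i+1)), |φ s - φ t| ≤ ε/2 := by
        intro s hs
        have := hδ (hcell s hs).1 (by rw [Real.dist_eq]; exact (hcell s hs).2)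
        rw [Real.dist_eq] at this
        exact this.le
      have htc : t ∈ Icc (P k i) (P k (i+1)) := ⟨hti.1, hti.2.le⟩
      first
      | -- lower
        show dist (ℓ k t) (φ t) < ε
        rw [show ℓ k t = cellInf φ (P k) i from stepFn_eval (hPart k) _ hi hti]
        have hle : cellInf φ (P k) i ≤ φ t := (hPart k).cellInf_le hM hi htc
        have hge : φ t - ε/2 ≤ cellInf φ (P k) i := by
          refine le_csInf ((hPart k).cell_nonempty hi) ?_
          rintro y ⟨s, hs, rfl⟩
          have := (abs_le.mp (hb1 s hs)).1
          linarith
        rw [Real.dist_eq]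
        have hfin : |cellInf φ (P k) i - φ t| ≤ ε/2 := abs_le.mpr ⟨by linarith, by linarith⟩
        exact lt_of_le_of_lt hfin (by linarith)
      | -- upper
        show dist (𝓊 k t) (φ t) < ε
        rw [show 𝓊 k t = cellSup φ (P k) i from stepFn_eval (hPart k) _ hi hti]
        have hle : φ t ≤ cellSup φ (P k) i := (hPart k).le_cellSup hM hi htc
        have hge : cellSup φ (P k) i ≤ φ t + ε/2 := by
          refine csSup_le ((hPart k).cell_nonempty hi) ?_
          rintro y ⟨s, hs, rfl⟩
          have := (abs_le.mp (hb1 s hs)).2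
          linarith
        rw [Real.dist_eq]
        have hfin : |cellSup φ (P k) i - φ t| ≤ ε/2 := abs_le.mpr ⟨by linarith, by linarith⟩
        exact lt_of_le_of_lt hfin (by linarith)
  set φ' : ℝ → ℝ := (Ico u v).indicator φ with hφ'
  have haeconv : ∀ᵐ t, Filter.Tendsto (fun k => ℓ k t) Filter.atTop (nhds (φ' t)) ∧
      Filter.Tendsto (fun k => 𝓊 k t) Filter.atTop (nhds (φ' t)) := by
    have hends : ∀ᵐ t : ℝ, t ∉ ({u, v} : Set ℝ) :=
      measure_eq_zero_iff_ae_notMem.mp (((Set.finite_singleton v).insert u).measure_zero _)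
    filter_upwards [hcont, hends] with t hct hends
    by_cases htm : t ∈ Ioo u v
    · have := hconvpt t htm (hct htm)
      rw [hφ', indicator_of_mem (Set.mem_Ico.mpr ⟨htm.1.le, htm.2⟩)]
      exact this
    · have htm' : t ∉ Ico u v := by
        intro hc
        rcases eq_or_lt_of_le hc.1 with h | h
        · exact hends (Or.inl h.symm)
        · exact htm ⟨h, hc.2⟩
      rw [hφ', indicator_of_notMem htm']
      constructor <;>
      · first
        | (rw [show (fun k => ℓ k t) = fun _ => (0:ℝ) from funext fun k => (hzero k t htm').1]
           exact tendsto_const_nhds)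
        | (rw [show (fun k => 𝓊 k t) = fun _ => (0:ℝ) from funext fun k => (hzero k t htm').2]
           exact tendsto_const_nhds)
  set bound : ℝ → ℝ := (Icc u v).indicator (fun _ => M) with hbound
  have hboundint : Integrable bound := by
    rw [hbound, integrable_indicator_iff measurableSet_Icc]
    exact integrableOn_const (by rw [Real.volume_Icc]; exact ENNReal.ofReal_ne_top)
  have hℓbd : ∀ k t, ‖ℓ k t‖ ≤ bound t := by
    intro k t
    by_cases htm : t ∈ Ico u v
    · rw [hbound, indicator_of_mem (Ico_subset_Icc_self htm), Real.norm_eq_abs]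
      exact (hPart k).stepFn_bound hM0 (fun i hi => (hPart k).abs_cellInf_le hM hi) t
    · rw [(hzero k t htm).1, hbound]
      by_cases h2 : t ∈ Icc u v
      · rw [indicator_of_mem h2]; simpa using hM0
      · rw [indicator_of_notMem h2]; simp
  have h𝓊bd : ∀ k t, ‖𝓊 k t‖ ≤ bound t := by
    intro k t
    by_cases htm : t ∈ Ico u v
    · rw [hbound, indicator_of_mem (Ico_subset_Icc_self htm), Real.norm_eq_abs]
      exact (hPart k).stepFn_bound hM0 (fun i hi => (hPart k).abs_cellSup_le hM hi) t
    · rw [(hzero k t htm).2, hbound]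
      by_cases h2 : t ∈ Icc u v
      · rw [indicator_of_mem h2]; simpa using hM0
      · rw [indicator_of_notMem h2]; simp
  have hLconv : Filter.Tendsto (fun k => ∫ t, ℓ k t) Filter.atTop (nhds (∫ t, φ' t)) :=
    tendsto_integral_of_dominated_convergence bound
      (fun k => (stepFn_measurable _).aestronglyMeasurable) hboundint
      (fun k => Filter.Eventually.of_forall (hℓbd k))
      (haeconv.mono fun t ht => ht.1)
  have hUconv : Filter.Tendsto (fun k => ∫ t, 𝓊 k t) Filter.atTop (nhds (∫ t, φ' t)) :=
    tendsto_integral_of_dominated_convergence bound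
      (fun k => (stepFn_measurable _).aestronglyMeasurable) hboundint
      (fun k => Filter.Eventually.of_forall (h𝓊bd k))
      (haeconv.mono fun t ht => ht.2)
  -- identify ∫ φ' with ∫_{Icc} φ
  have hdiff : φ =ᶠ[ae (volume.restrict (Icc u v))] φ' := by
    rw [Filter.EventuallyEq, ae_restrict_iff' measurableSet_Icc, ae_iff]
    refine measure_mono_null ?_ (Real.volume_singleton (a := v))
    intro t ht
    simp only [mem_setOf_eq, not_forall] at ht
    obtain ⟨htcc, hne⟩ := ht
    by_contra hv
    refine hne ?_
    rw [hφ', indicator_of_mem (Set.mem_Ico.mpr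
      ⟨htcc.1, lt_of_le_of_ne htcc.2 (fun h => hv (mem_singleton_iff.mpr h))⟩)]
  have hφ'eqV : ∫ t, φ' t = ∫ t in Icc u v, φ t := by
    rw [integral_congr_ae hdiff, ← integral_indicator measurableSet_Icc,
      Set.indicator_eq_self.2 (subset_trans Set.support_indicator_subset Ico_subset_Icc_self)]
  set V := ∫ t in Icc u v, φ t with hV
  rw [hφ'eqV] at hLconv hUconv
  have hLk : ∀ k, ∫ t, ℓ k t = lowerSum φ (k+1) (P k) := fun k => (hPart k).stepL_integral
  have hUk : ∀ k, ∫ t, 𝓊 k t = upperSum φ (k+1) (P k) := fun k => (hPart k).stepU_integral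
  -- lowerDarboux = V
  have hlD_ge : V ≤ lowerDarboux φ u v := by
    refine le_of_tendsto hLconv (Filter.Eventually.of_forall fun k => ?_)
    rw [hLk k]
    exact lowerSum_le_lowerDarboux hM (hPart k)
  have hle_allU : ∀ s ∈ lowerSet φ u v, s ≤ V := by
    rintro s ⟨m, y, hQ, rfl⟩
    refine ge_of_tendsto hUconv (Filter.Eventually.of_forall fun k => ?_)
    rw [← hQ.stepL_integral (φ := φ)]
    refine integral_mono (hQ.stepFn_integrable _) ((hPart k).stepFn_integrable _) fun t => ?_
    by_cases htm : t ∈ Ico u v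
    · exact le_trans (hQ.stepL_le hM htm) (hstep k t htm).2
    · rw [(hzero k t htm).2, hQ.stepFn_zero _ htm]
  have hlD_le : lowerDarboux φ u v ≤ V :=
    csSup_le (lowerSet_nonempty hlt.le) hle_allU
  have hlD : lowerDarboux φ u v = V := le_antisymm hlD_le hlD_ge
  -- upperDarboux = V
  have huD_le : upperDarboux φ u v ≤ V := by
    refine ge_of_tendsto hUconv (Filter.Eventually.of_forall fun k => ?_)
    rw [hUk k]
    exact upperDarboux_le_upperSum hM (hPart k)
  have hge_allL : ∀ s ∈ upperSet φ u v, V ≤ s := by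
    rintro s ⟨m, y, hQ, rfl⟩
    refine le_of_tendsto hLconv (Filter.Eventually.of_forall fun k => ?_)
    rw [← hQ.stepU_integral (φ := φ)]
    refine integral_mono ((hPart k).stepFn_integrable _) (hQ.stepFn_integrable _) fun t => ?_
    by_cases htm : t ∈ Ico u v
    · exact le_trans (hstep k t htm).1 (hQ.le_stepU hM htm)
    · rw [(hzero k t htm).1, hQ.stepFn_zero _ htm]
  have huD_ge : V ≤ upperDarboux φ u v :=
    le_csInf (upperSet_nonempty hlt.le) hge_allL
  have huD : upperDarboux φ u v = V := le_antisymm huD_le huD_ge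
  exact ⟨by rw [hlD, huD], hlD⟩

end BridgeB

section Vitali

/-- A set on which `G` has a Lipschitz inverse, with null image, is null. -/
theorem null_of_inv_lipschitz {j : ℕ} {T : Set ℝ} {G : ℝ → ℝ}
    (hA : volume (G '' T) = 0)
    (hlip : ∀ s ∈ T, ∀ t ∈ T, |s - t| ≤ (j + 1) * |G s - G t|) : volume T = 0 := by
  classical
  set ρ : ℝ → ℝ := Function.invFunOn G T with hρ
  have hρT : ∀ y ∈ G '' T, ρ y ∈ T ∧ G (ρ y) = y := by
    rintro y ⟨t, ht, rfl⟩
    exact ⟨Function.invFunOn_mem ⟨t, ht, rfl⟩, Function.invFunOn_eq ⟨t, ht, rfl⟩⟩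
  have hTeq : T = ρ '' (G '' T) := by
    apply Subset.antisymm
    · intro t ht
      refine ⟨G t, ⟨t, ht, rfl⟩, ?_⟩
      have h1 := hρT (G t) ⟨t, ht, rfl⟩
      have h2 := hlip (ρ (G t)) h1.1 t ht
      rw [h1.2] at h2
      simp only [sub_self, abs_zero, mul_zero] at h2
      have : |ρ (G t) - t| = 0 := le_antisymm h2 (abs_nonneg _)
      have := abs_eq_zero.mp this
      linarith [this]
    · rintro t ⟨y, hy, rfl⟩
      exact (hρT y hy).1
  have hLip : LipschitzOnWith ((j:NNReal) + 1) ρ (G '' T) := by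
    refine LipschitzOnWith.of_dist_le_mul ?_
    intro y₁ h₁ y₂ h₂
    obtain ⟨hm₁, he₁⟩ := hρT y₁ h₁
    obtain ⟨hm₂, he₂⟩ := hρT y₂ h₂
    rw [Real.dist_eq, Real.dist_eq]
    have := hlip (ρ y₁) hm₁ (ρ y₂) hm₂
    rw [he₁, he₂] at this
    refine le_trans this (le_of_eq ?_)
    push_cast
    ring
  have h1 : volume T = μH[1] T := by rw [MeasureTheory.hausdorffMeasure_real]
  rw [h1, hTeq]
  have h2 := hLip.hausdorffMeasure_image_le (d := 1) zero_le_one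
  have h3 : μH[1] (G '' T) = 0 := by
    rw [MeasureTheory.hausdorffMeasure_real]; exact hA
  rw [h3, mul_zero] at h2
  exact le_antisymm h2 zero_le

theorem vitali_null {G G' : ℝ → ℝ} {c d : ℝ}
    (hG : ∀ t ∈ Icc c d, HasDerivWithinAt G (G' t) (Icc c d) t)
    {A : Set ℝ} (hA : volume A = 0) :
    volume {t | t ∈ Icc c d ∧ G t ∈ A ∧ G' t ≠ 0} = 0 := by
  set T : ℕ → ℕ → ℚ → Set ℝ := fun j n q =>
    {t | t ∈ Icc c d ∧ G t ∈ A ∧ t ∈ Icc (q:ℝ) (q + 1/(n+1)) ∧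
      ∀ s ∈ Icc c d, |s - t| ≤ 1/(n+1) → |s - t| ≤ (j + 1) * |G s - G t|} with hT
  have hcover : {t | t ∈ Icc c d ∧ G t ∈ A ∧ G' t ≠ 0} ⊆
      ⋃ (j : ℕ) (n : ℕ) (q : ℚ), T j n q := by
    rintro t ⟨htcd, htA, htG'⟩
    have hε : 0 < |G' t| / 2 := by positivity
    set ε := |G' t| / 2 with hεdef
    have hlo := (hasDerivWithinAt_iff_isLittleO.mp (hG t htcd)).def hε
    rw [eventually_nhdsWithin_iff, Metric.eventually_nhds_iff] at hlo
    obtain ⟨δ, hδ0, hδ⟩ := hlo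
    set j : ℕ := ⌈ε⁻¹⌉₊ with hj
    set n : ℕ := ⌈δ⁻¹⌉₊ with hn
    have hn1 : 1/((n:ℝ)+1) < δ := by
      rw [div_lt_iff₀ (by positivity), ← div_lt_iff₀' hδ0]
      calc 1/δ ≤ (⌈δ⁻¹⌉₊ : ℝ) := by rw [one_div]; exact Nat.le_ceil _
        _ < (n:ℝ) + 1 := by rw [hn]; linarith
    obtain ⟨q, hq1, hq2⟩ := exists_rat_btwn (sub_lt_self t (by positivity : (0:ℝ) < 1/((n:ℝ)+1)))
    refine mem_iUnion.mpr ⟨j, mem_iUnion.mpr ⟨n, mem_iUnion.mpr ⟨q, ?_⟩⟩⟩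
    refine ⟨htcd, htA, ⟨hq2.le, by push_cast; linarith⟩, ?_⟩
    intro s hscd hsn
    have hdist : dist s t < δ := by
      rw [Real.dist_eq]
      exact lt_of_le_of_lt hsn hn1
    have hb := hδ hdist hscd
    rw [Real.norm_eq_abs, Real.norm_eq_abs, smul_eq_mul] at hb
    have htri : |(s - t) * G' t| - |G s - G t| ≤ |G s - G t - (s - t) * G' t| := by
      have := abs_sub_abs_le_abs_sub ((s - t) * G' t) (G s - G t)
      rw [show |(s-t) * G' t - (G s - G t)| = |G s - G t - (s-t) * G' t| from abs_sub_comm _ _]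
        at this
      linarith
    rw [abs_mul] at htri
    have h2ε : |G' t| = 2 * ε := by rw [hεdef]; ring
    have hGlow : ε * |s - t| ≤ |G s - G t| := by nlinarith [abs_nonneg (s - t)]
    have hjε : ε⁻¹ ≤ (j:ℝ) + 1 := by
      calc ε⁻¹ ≤ (⌈ε⁻¹⌉₊ : ℝ) := Nat.le_ceil _
        _ ≤ (j:ℝ) + 1 := by rw [hj]; linarith
    calc |s - t| = ε⁻¹ * (ε * |s - t|) := by field_simp
      _ ≤ ε⁻¹ * |G s - G t| := by
          exact mul_le_mul_of_nonneg_left hGlow (by positivity)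
      _ ≤ ((j:ℝ) + 1) * |G s - G t| := mul_le_mul_of_nonneg_right hjε (abs_nonneg _)
  refine measure_mono_null hcover ?_
  refine measure_iUnion_null fun j => measure_iUnion_null fun n => measure_iUnion_null fun q => ?_
  refine null_of_inv_lipschitz (j := j) (G := G) ?_ ?_
  · refine measure_mono_null ?_ hA
    rintro y ⟨t, ht, rfl⟩
    exact ht.2.1
  · intro s hs t ht
    have hs4 := hs.2.2.2
    have ht4 := ht.2.2.2
    have hsn : |s - t| ≤ 1/((n:ℝ)+1) := by
      have h1 := hs.2.2.1
      have h2 := ht.2.2.1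
      rw [abs_sub_le_iff]
      constructor <;> [linarith [h1.1, h1.2, h2.1, h2.2]; linarith [h1.1, h1.2, h2.1, h2.2]]
    exact ht4 s hs.1 hsn

end Vitali

section MonoFTC

theorem mono_ftc {P g : ℝ → ℝ} (hP : Monotone P) (hPc : Continuous P) {c d : ℝ}
    (hcd : c ≤ d) (hg : ∀ᵐ t, t ∈ Ioo c d → HasDerivAt P (g t) t) :
    ∫⁻ t in Icc c d, ENNReal.ofReal (g t) ≤ ENNReal.ofReal (P d - P c) := by
  set δ : ℕ → ℝ := fun k => 1/((k:ℝ)+1) with hδdef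
  have hδ0 : ∀ k, 0 < δ k := fun k => by positivity
  set q : ℕ → ℝ → ℝ := fun k t => (P (t + δ k) - P t) / δ k with hq
  have hq0 : ∀ k t, 0 ≤ q k t := fun k t =>
    div_nonneg (sub_nonneg.mpr (hP (by linarith [hδ0 k]))) (hδ0 k).le
  have hqc : ∀ k, Continuous (q k) := fun k =>
    ((hPc.comp (continuous_add_right (δ k))).sub hPc).div_const _
  have hδtend : Filter.Tendsto δ Filter.atTop (nhds 0) := tendsto_one_div_add_atTop_nhds_zero_nat
  -- pointwise convergence of slopes
  have hslope : ∀ᵐ t, t ∈ Ioo c d →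
      Filter.Tendsto (fun k => q k t) Filter.atTop (nhds (g t)) := by
    filter_upwards [hg] with t hgt htIoo
    have hD := hasDerivAt_iff_tendsto_slope.mp (hgt htIoo)
    have hseq : Filter.Tendsto (fun k => t + δ k) Filter.atTop (nhdsWithin t {t}ᶜ) := by
      rw [tendsto_nhdsWithin_iff]
      constructor
      · simpa using (tendsto_const_nhds (x := t)).add hδtend
      · exact Filter.Eventually.of_forall fun k => by
          simp only [mem_compl_iff, mem_singleton_iff]
          intro hc
          nlinarith [hδ0 k, hc]
    have := hD.comp hseq
    refine this.congr fun k => ?_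
    simp only [Function.comp_apply, slope_def_field]
    rw [hq]
    field_simp
    rw [add_sub_cancel_left]
  -- a.e. equality of liminf on Icc
  have haeeq : ∀ᵐ t ∂(volume.restrict (Icc c d)),
      ENNReal.ofReal (g t) = Filter.liminf (fun k => ENNReal.ofReal (q k t)) Filter.atTop := by
    rw [ae_restrict_iff' measurableSet_Icc]
    have hends : ∀ᵐ t : ℝ, t ∉ ({c, d} : Set ℝ) :=
      measure_eq_zero_iff_ae_notMem.mp (((Set.finite_singleton d).insert c).measure_zero _)
    filter_upwards [hslope, hends] with t hsl hend htcc
    have htIoo : t ∈ Ioo c d := by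
      rcases eq_or_lt_of_le htcc.1 with h | h
      · exact absurd (Or.inl h.symm) hend
      rcases eq_or_lt_of_le htcc.2 with h | h
      · exact absurd (Or.inr h) hend
      exact ⟨‹_›, ‹_›⟩
    have := (ENNReal.continuous_ofReal.tendsto _).comp (hsl htIoo)
    exact (this.liminf_eq).symm
  rw [lintegral_congr_ae haeeq]
  refine le_trans (lintegral_liminf_le fun k => ((hqc k).measurable).ennreal_ofReal) ?_
  have hbnd : ∀ k, ∫⁻ t in Icc c d, ENNReal.ofReal (q k t) ≤
      ENNReal.ofReal (P (d + δ k) - P c) := by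
    intro k
    have hint : IntegrableOn (q k) (Icc c d) volume := (hqc k).integrableOn_Icc
    rw [← ofReal_integral_eq_lintegral_ofReal hint
      (Filter.Eventually.of_forall fun t => hq0 k t)]
    refine ENNReal.ofReal_le_ofReal ?_
    have hPint : ∀ a b : ℝ, IntervalIntegrable P volume a b := fun a b =>
      hPc.intervalIntegrable a b
    have hIcc : ∫ t in Icc c d, q k t = ∫ t in c..d, q k t := by
      rw [MeasureTheory.integral_Icc_eq_integral_Ioc, intervalIntegral.integral_of_le hcd]
    rw [hIcc]
    have h1 : ∫ t in c..d, q k t =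
        ((∫ t in c..d, P (t + δ k)) - ∫ t in c..d, P t) / δ k := by
      rw [hq]
      rw [intervalIntegral.integral_div]
      congr 1
      exact intervalIntegral.integral_sub ((hPc.comp (continuous_add_right (δ k))).intervalIntegrable _ _)
        (hPint c d)
    have h2 : ∫ t in c..d, P (t + δ k) = ∫ t in (c + δ k)..(d + δ k), P t :=
      intervalIntegral.integral_comp_add_right P (δ k)
    have h3 : (∫ t in c..(c + δ k), P t) + ∫ t in (c + δ k)..(d + δ k), P t
        = ∫ t in c..(d + δ k), P t :=
      intervalIntegral.integral_add_adjacent_intervals (hPint _ _) (hPint _ _)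
    have h4 : (∫ t in c..d, P t) + ∫ t in d..(d + δ k), P t = ∫ t in c..(d + δ k), P t :=
      intervalIntegral.integral_add_adjacent_intervals (hPint _ _) (hPint _ _)
    have h5 : ∫ t in d..(d + δ k), P t ≤ δ k * P (d + δ k) := by
      have := intervalIntegral.integral_mono_on (by linarith [hδ0 k] : d ≤ d + δ k)
        (hPint d (d + δ k)) (intervalIntegrable_const) (fun t ht => hP ht.2)
      rw [intervalIntegral.integral_const] at this
      rw [show d + δ k - d = δ k from by ring] at this
      simpa [smul_eq_mul] using this
    have h6 : δ k * P c ≤ ∫ t in c..(c + δ k), P t := by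
      have := intervalIntegral.integral_mono_on (by linarith [hδ0 k] : c ≤ c + δ k)
        (intervalIntegrable_const) (hPint c (c + δ k)) (fun t ht => hP ht.1)
      rw [intervalIntegral.integral_const] at this
      rw [show c + δ k - c = δ k from by ring] at this
      simpa [smul_eq_mul] using this
    rw [h1, h2]
    rw [div_le_iff₀ (hδ0 k)]
    nlinarith [h3, h4, h5, h6]
  refine le_trans (Filter.liminf_le_liminf (Filter.Eventually.of_forall hbnd)) ?_
  have htendP : Filter.Tendsto (fun k => ENNReal.ofReal (P (d + δ k) - P c)) Filter.atTop
      (nhds (ENNReal.ofReal (P d - P c))) := by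
    refine (ENNReal.continuous_ofReal.tendsto _).comp ?_
    have : Filter.Tendsto (fun k => d + δ k) Filter.atTop (nhds d) := by
      simpa using (tendsto_const_nhds (x := d)).add hδtend
    exact ((hPc.tendsto d).comp this).sub_const _
  rw [htendP.liminf_eq]

end MonoFTC

section Main

theorem clamp_lip (c d s t : ℝ) : |max c (min s d) - max c (min t d)| ≤ |s - t| := by
  have h1 := abs_max_sub_max_le_max c (min s d) c (min t d)
  have h2 := abs_min_sub_min_le_max s d t d
  simp only [sub_self, abs_zero] at h1 h2
  have h3 : max 0 |min s d - min t d| = |min s d - min t d| := max_eq_right (abs_nonneg _)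
  have h4 : max |s - t| (0:ℝ) = |s - t| := max_eq_left (abs_nonneg _)
  rw [h3] at h1
  rw [h4] at h2
  exact le_trans h1 h2

set_option maxHeartbeats 1000000 in
theorem terekhina_main (a b c d : ℝ) (hab : a ≤ b) (hcd : c ≤ d) (f G G' : ℝ → ℝ)
    (hf : RiemannIntegrableOn f a b)
    (hG : ∀ t ∈ Set.Icc c d, HasDerivWithinAt G (G' t) (Set.Icc c d) t)
    (hG' : RiemannIntegrableOn G' c d)
    (hrange : G '' Set.Icc c d ⊆ Set.Icc a b)
    (hGc : G c = a) (hGd : G d = b) :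
    RiemannIntegrableOn (fun t => f (G t) * G' t) c d ∧
      riemannIntegral f a b = riemannIntegral (fun t => f (G t) * G' t) c d := by
  obtain ⟨⟨Mf, hMf⟩, hfeq⟩ := hf
  obtain ⟨⟨Mg, hMg⟩, hgeq⟩ := hG'
  set h : ℝ → ℝ := fun t => f (G t) * G' t with hhdef
  have hGmem : ∀ t ∈ Icc c d, G t ∈ Icc a b := fun t ht => hrange ⟨t, ht, rfl⟩
  have hMf0 : 0 ≤ Mf := le_trans (abs_nonneg _) (hMf a ⟨le_rfl, hab⟩)
  have hMg0 : 0 ≤ Mg := le_trans (abs_nonneg _) (hMg c ⟨le_rfl, hcd⟩)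
  have hhbd : ∀ t ∈ Icc c d, |h t| ≤ Mf * Mg := by
    intro t ht
    rw [hhdef]
    simp only [abs_mul]
    exact mul_le_mul (hMf _ (hGmem t ht)) (hMg t ht) (abs_nonneg _) hMf0
  -- degenerate: c = d
  rcases eq_or_lt_of_le hcd with rfl | hcd'
  · have hba : a = b := by rw [← hGc, ← hGd]
    refine ⟨⟨⟨Mf * Mg, hhbd⟩, by rw [lowerDarboux_self, upperDarboux_self]⟩, ?_⟩
    rw [riemannIntegral, riemannIntegral, if_pos hab, if_pos le_rfl, lowerDarboux_self]
    subst hba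
    rw [lowerDarboux_self]
  -- degenerate: a = b
  rcases eq_or_lt_of_le hab with rfl | hab'
  · have hGconst : ∀ t ∈ Icc c d, G t = a := fun t ht => by
      have := hGmem t ht
      rw [Icc_self] at this
      exact this
    have hG'zero : ∀ t ∈ Icc c d, G' t = 0 := by
      intro t ht
      have h1 : HasDerivWithinAt (fun _ : ℝ => a) (G' t) (Icc c d) t :=
        (hG t ht).congr (fun s hs => (hGconst s hs).symm) (hGconst t ht).symm
      have h2 : HasDerivWithinAt (fun _ : ℝ => a) 0 (Icc c d) t := hasDerivWithinAt_const t _ a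
      exact (uniqueDiffOn_Icc hcd' t ht).eq_deriv _ h1 h2
    have hhzero : ∀ t ∈ Icc c d, h t = 0 := fun t ht => by
      rw [hhdef]; simp [hG'zero t ht]
    have hhcont : ∀ᵐ t, t ∈ Ioo c d → ContinuousWithinAt h (Icc c d) t := by
      refine Filter.Eventually.of_forall fun t ht => ?_
      have : ContinuousWithinAt (fun _ : ℝ => (0:ℝ)) (Icc c d) t := continuousWithinAt_const
      exact this.congr (fun s hs => hhzero s hs) (hhzero t (Ioo_subset_Icc_self ht))
    obtain ⟨hheq, hhval⟩ := bridgeB hcd hhbd hhcont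
    refine ⟨⟨⟨Mf * Mg, hhbd⟩, hheq⟩, ?_⟩
    rw [riemannIntegral, riemannIntegral, if_pos le_rfl, if_pos hcd, lowerDarboux_self, hhval]
    rw [setIntegral_congr_fun measurableSet_Icc hhzero]
    simp
  -- main case
  obtain ⟨hfInt, hfVal, hfCont⟩ := bridgeA hab hMf hfeq
  obtain ⟨hG'Int, hG'Val, hG'Cont⟩ := bridgeA hcd hMg hgeq
  have hGcont : ∀ t ∈ Icc c d, ContinuousWithinAt G (Icc c d) t :=
    fun t ht => (hG t ht).continuousWithinAt
  have hGlip : ∀ x ∈ Icc c d, ∀ y ∈ Icc c d, |G x - G y| ≤ Mg * |x - y| := by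
    intro x hx y hy
    have := Convex.norm_image_sub_le_of_norm_hasDerivWithin_le hG
      (fun s hs => by rw [Real.norm_eq_abs]; exact hMg s hs) (convex_Icc c d) hy hx
    rwa [Real.norm_eq_abs, Real.norm_eq_abs] at this
  -- Vitali set
  set A : Set ℝ := {x | x ∈ Ioo a b ∧ ¬ContinuousWithinAt f (Icc a b) x} with hA
  have hAnull : volume A = 0 := by
    have := hfCont
    rw [MeasureTheory.ae_iff] at this
    refine measure_mono_null ?_ this
    intro x hx
    simp only [mem_setOf_eq, Classical.not_imp]
    exact ⟨hx.1, hx.2⟩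
  have hVit := vitali_null hG hAnull
  have hVit' : ∀ᵐ t : ℝ, t ∉ {t | t ∈ Icc c d ∧ G t ∈ A ∧ G' t ≠ 0} :=
    measure_eq_zero_iff_ae_notMem.mp hVit
  -- clamp of G
  set Gc : ℝ → ℝ := fun s => G (max c (min s d)) with hGcdef
  have hclampmem : ∀ s : ℝ, max c (min s d) ∈ Icc c d :=
    fun s => ⟨le_max_left _ _, max_le hcd (min_le_right s d)⟩
  have hGcmem : ∀ s, Gc s ∈ Icc a b := fun s => hGmem _ (hclampmem s)
  have hGceq : ∀ s ∈ Icc c d, Gc s = G s := by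
    intro s hs
    show G (max c (min s d)) = G s
    rw [min_eq_left hs.2, max_eq_right hs.1]
  have hGcDeriv : ∀ t ∈ Ioo c d, HasDerivAt Gc (G' t) t := by
    intro t ht
    have h1 : HasDerivAt G (G' t) t :=
      (hG t (Ioo_subset_Icc_self ht)).hasDerivAt (Icc_mem_nhds ht.1 ht.2)
    refine h1.congr_of_eventuallyEq ?_
    filter_upwards [Ioo_mem_nhds ht.1 ht.2] with s hs
    exact hGceq s (Ioo_subset_Icc_self hs)
  have hGclip : ∀ s t : ℝ, |Gc s - Gc t| ≤ Mg * |s - t| := by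
    intro s t
    refine le_trans (hGlip _ (hclampmem s) _ (hclampmem t)) ?_
    exact mul_le_mul_of_nonneg_left (clamp_lip c d s t) hMg0
  -- interior image at points with nonzero derivative
  have hInterior : ∀ t ∈ Ioo c d, G' t ≠ 0 → G t ∈ Ioo a b := by
    intro t ht hz
    obtain ⟨h1, h2⟩ := hGmem t (Ioo_subset_Icc_self ht)
    constructor
    · rcases eq_or_lt_of_le h1 with heq | hlt
      · exfalso
        refine hz ?_
        have hmin : IsLocalMin Gc t := Filter.Eventually.of_forall fun s => by
          rw [hGceq t (Ioo_subset_Icc_self ht), ← heq]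
          exact (hGcmem s).1
        exact hmin.hasDerivAt_eq_zero (hGcDeriv t ht)
      · exact hlt
    · rcases eq_or_lt_of_le h2 with heq | hlt
      · exfalso
        refine hz ?_
        have hmax : IsLocalMax Gc t := Filter.Eventually.of_forall fun s => by
          rw [hGceq t (Ioo_subset_Icc_self ht), heq]
          exact (hGcmem s).2
        exact hmax.hasDerivAt_eq_zero (hGcDeriv t ht)
      · exact hlt
  -- a.e. continuity of h
  have hhcont : ∀ᵐ t, t ∈ Ioo c d → ContinuousWithinAt h (Icc c d) t := by
    filter_upwards [hG'Cont, hVit'] with t hctG' hnA htIoo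
    have htcc : t ∈ Icc c d := Ioo_subset_Icc_self htIoo
    have hG'ct := hctG' htIoo
    by_cases hz : G' t = 0
    · have h0 : h t = 0 := by rw [hhdef]; simp [hz]
      rw [ContinuousWithinAt, h0]
      have hbd : ∀ᶠ s in nhdsWithin t (Icc c d), ‖h s‖ ≤ Mf * |G' s| := by
        filter_upwards [self_mem_nhdsWithin] with s hs
        rw [hhdef, Real.norm_eq_abs, abs_mul]
        exact mul_le_mul_of_nonneg_right (hMf _ (hGmem s hs)) (abs_nonneg _)
      have htend : Filter.Tendsto (fun s => Mf * |G' s|) (nhdsWithin t (Icc c d)) (nhds 0) := by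
        have h1 : Filter.Tendsto (fun s => |G' s|) (nhdsWithin t (Icc c d)) (nhds |G' t|) :=
          (continuous_abs.tendsto _).comp hG'ct
        rw [hz, abs_zero] at h1
        simpa using h1.const_mul Mf
      exact squeeze_zero_norm' hbd htend
    · have hGtIoo : G t ∈ Ioo a b := hInterior t htIoo hz
      have hfct : ContinuousWithinAt f (Icc a b) (G t) := by
        by_contra hc
        exact hnA ⟨htcc, ⟨hGtIoo, hc⟩, hz⟩
      have hcomp : ContinuousWithinAt (fun s => f (G s)) (Icc c d) t :=
        hfct.comp (hGcont t htcc) (fun s hs => hGmem s hs)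
      exact hcomp.mul hG'ct
  obtain ⟨hheq, hhval⟩ := bridgeB hcd hhbd hhcont
  obtain ⟨hhInt, _, _⟩ := bridgeA hcd hhbd hheq
  -- the primitive
  set Φ : ℝ → ℝ := fun x => ∫ τ in a..x, f τ with hΦdef
  have hfII : ∀ x ∈ Icc a b, ∀ y ∈ Icc a b, IntervalIntegrable f volume x y := by
    intro x hx y hy
    refine (hfInt.mono_set ?_).intervalIntegrable
    rw [uIcc]
    exact Icc_subset_Icc (le_min hx.1 hy.1) (max_le hx.2 hy.2)
  have hΦlip : ∀ x ∈ Icc a b, ∀ y ∈ Icc a b, |Φ x - Φ y| ≤ Mf * |x - y| := by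
    intro x hx y hy
    rw [hΦdef]
    rw [show (∫ τ in a..x, f τ) - ∫ τ in a..y, f τ = ∫ τ in y..x, f τ from
      intervalIntegral.integral_interval_sub_left (hfII a ⟨le_rfl, hab⟩ x hx)
        (hfII a ⟨le_rfl, hab⟩ y hy)]
    have hsub : Set.uIoc y x ⊆ Icc a b := by
      rw [uIoc]
      exact Ioc_subset_Icc_self.trans (Icc_subset_Icc (le_min hy.1 hx.1) (max_le hy.2 hx.2))
    have hb : ∀ s ∈ Set.uIoc y x, ‖f s‖ ≤ Mf := fun s hs => by
      rw [Real.norm_eq_abs]; exact hMf s (hsub hs)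
    have hmain := intervalIntegral.norm_integral_le_of_norm_le_const hb
    rwa [Real.norm_eq_abs] at hmain
  set H : ℝ → ℝ := fun s => Φ (Gc s) with hHdef
  have hHlip : ∀ s t : ℝ, |H s - H t| ≤ Mf * Mg * |s - t| := by
    intro s t
    refine le_trans (hΦlip _ (hGcmem s) _ (hGcmem t)) ?_
    rw [mul_assoc]
    exact mul_le_mul_of_nonneg_left (hGclip s t) hMf0
  have hHcont : Continuous H := by
    have : LipschitzWith (Real.toNNReal (Mf * Mg)) H := by
      refine LipschitzWith.of_dist_le_mul fun s t => ?_
      rw [Real.dist_eq, Real.dist_eq, Real.coe_toNNReal']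
      exact le_trans (hHlip s t) (mul_le_mul_of_nonneg_right (le_max_left _ _) (abs_nonneg _))
    exact this.continuous
  -- a.e. derivative of H
  have hHderiv : ∀ᵐ t, t ∈ Ioo c d → HasDerivAt H (h t) t := by
    filter_upwards [hVit'] with t hnA htIoo
    have htcc : t ∈ Icc c d := Ioo_subset_Icc_self htIoo
    by_cases hz : G' t = 0
    · have h0 : h t = 0 := by rw [hhdef]; simp [hz]
      rw [h0]
      rw [hasDerivAt_iff_tendsto]
      have hGc0 : HasDerivAt Gc 0 t := hz ▸ hGcDeriv t htIoo
      have hGt := hasDerivAt_iff_tendsto.mp hGc0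
      have hsq : ∀ s : ℝ, ‖s - t‖⁻¹ * ‖H s - H t - (s - t) • (0:ℝ)‖ ≤
          Mf * (‖s - t‖⁻¹ * ‖Gc s - Gc t - (s - t) • (0:ℝ)‖) := by
        intro s
        simp only [smul_zero, sub_zero, Real.norm_eq_abs]
        rw [show Mf * (|s - t|⁻¹ * |Gc s - Gc t|) = |s - t|⁻¹ * (Mf * |Gc s - Gc t|) from by ring]
        refine mul_le_mul_of_nonneg_left ?_ (by positivity)
        exact hΦlip _ (hGcmem s) _ (hGcmem t)
      have := hGt.const_mul Mf
      simp only [mul_zero] at this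
      exact squeeze_zero (fun s => by positivity) hsq this
    · have hGtIoo : G t ∈ Ioo a b := hInterior t htIoo hz
      have hfct : ContinuousWithinAt f (Icc a b) (G t) := by
        by_contra hc
        exact hnA ⟨htcc, ⟨hGtIoo, hc⟩, hz⟩
      have hfca : ContinuousAt f (G t) :=
        hfct.continuousAt (Icc_mem_nhds hGtIoo.1 hGtIoo.2)
      have hmeasAt : StronglyMeasurableAtFilter f (nhds (G t)) volume :=
        ⟨Ioo a b, Ioo_mem_nhds hGtIoo.1 hGtIoo.2,
          hfInt.aestronglyMeasurable.mono_measure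
            (Measure.restrict_mono Ioo_subset_Icc_self le_rfl)⟩
      have hΦd : HasDerivAt Φ (f (G t)) (G t) :=
        intervalIntegral.integral_hasDerivAt_right
          (hfII a ⟨le_rfl, hab⟩ (G t) (hGmem t htcc)) hmeasAt hfca
      have hΦd' : HasDerivAt Φ (f (G t)) (Gc t) := by rwa [hGceq t htcc]
      have := hΦd'.comp t (hGcDeriv t htIoo)
      exact this
  -- monotone FTC, both directions
  set K : ℝ := Mf * Mg + 1 with hK
  have hK0 : 0 < K := by positivity
  have hhK : ∀ t ∈ Icc c d, |h t| < K := fun t ht => lt_of_le_of_lt (hhbd t ht) (by linarith)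
  have hHK : ∀ s t : ℝ, s ≤ t → H t - H s ≤ K * (t - s) ∧ -(K * (t - s)) ≤ H t - H s := by
    intro s t hst
    have := hHlip t s
    rw [abs_le] at this
    have habs : |t - s| = t - s := abs_of_nonneg (by linarith)
    rw [habs] at this
    constructor <;> nlinarith [this.1, this.2]
  have hP1mono : Monotone (fun t => t * K - H t) := by
    intro s t hst
    have := (hHK s t hst).1
    simp only
    nlinarith
  have hP2mono : Monotone (fun t => t * K + H t) := by
    intro s t hst
    have := (hHK s t hst).2
    simp only
    nlinarith
  have hP1cont : Continuous (fun t => t * K - H t) := (continuous_id.mul continuous_const).sub hHcont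
  have hP2cont : Continuous (fun t => t * K + H t) := (continuous_id.mul continuous_const).add hHcont
  have hP1deriv : ∀ᵐ t, t ∈ Ioo c d → HasDerivAt (fun t => t * K - H t) (K - h t) t := by
    filter_upwards [hHderiv] with t hH htIoo
    exact (hasDerivAt_mul_const K).sub (hH htIoo)
  have hP2deriv : ∀ᵐ t, t ∈ Ioo c d → HasDerivAt (fun t => t * K + H t) (K + h t) t := by
    filter_upwards [hHderiv] with t hH htIoo
    exact (hasDerivAt_mul_const K).add (hH htIoo)
  have hftc1 := mono_ftc hP1mono hP1cont hcd (hP1deriv.mono fun t ht => ht)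
  have hftc2 := mono_ftc hP2mono hP2cont hcd (hP2deriv.mono fun t ht => ht)
  -- convert to real inequalities
  have hconst : IntegrableOn (fun _ : ℝ => K) (Icc c d) volume :=
    integrableOn_const (by rw [Real.volume_Icc]; exact ENNReal.ofReal_ne_top)
  have hKint : ∫ t in Icc c d, (K : ℝ) = K * (d - c) := by
    rw [setIntegral_const, smul_eq_mul, Real.volume_real_Icc_of_le (by linarith)]
    ring
  have hsub1 : ∫ t in Icc c d, (K - h t) = K * (d - c) - ∫ t in Icc c d, h t := by
    rw [integral_sub hconst hhInt, hKint]
  have hsub2 : ∫ t in Icc c d, (K + h t) = K * (d - c) + ∫ t in Icc c d, h t := by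
    rw [integral_add hconst hhInt, hKint]
  have hae1 : 0 ≤ᶠ[ae (volume.restrict (Icc c d))] fun t => K - h t := by
    rw [Filter.EventuallyLE, ae_restrict_iff' measurableSet_Icc]
    refine Filter.Eventually.of_forall fun t ht => ?_
    have := (abs_lt.mp (hhK t ht)).2
    simp only [Pi.zero_apply]
    linarith
  have hae2 : 0 ≤ᶠ[ae (volume.restrict (Icc c d))] fun t => K + h t := by
    rw [Filter.EventuallyLE, ae_restrict_iff' measurableSet_Icc]
    refine Filter.Eventually.of_forall fun t ht => ?_
    have := (abs_lt.mp (hhK t ht)).1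
    simp only [Pi.zero_apply]
    linarith
  have hint1 : IntegrableOn (fun t => K - h t) (Icc c d) volume := hconst.sub hhInt
  have hint2 : IntegrableOn (fun t => K + h t) (Icc c d) volume := hconst.add hhInt
  have hlhs1 : ∫⁻ t in Icc c d, ENNReal.ofReal (K - h t) =
      ENNReal.ofReal (K * (d - c) - ∫ t in Icc c d, h t) := by
    rw [← hsub1, ← ofReal_integral_eq_lintegral_ofReal hint1 hae1]
  have hlhs2 : ∫⁻ t in Icc c d, ENNReal.ofReal (K + h t) =
      ENNReal.ofReal (K * (d - c) + ∫ t in Icc c d, h t) := by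
    rw [← hsub2, ← ofReal_integral_eq_lintegral_ofReal hint2 hae2]
  rw [hlhs1] at hftc1
  rw [hlhs2] at hftc2
  have hHdc := hHK c d hcd
  have hineq1 : K * (d - c) - ∫ t in Icc c d, h t ≤ d * K - H d - (c * K - H c) := by
    have hrhs : (0:ℝ) ≤ d * K - H d - (c * K - H c) := by linarith [hHdc.1]
    exact (ENNReal.ofReal_le_ofReal_iff hrhs).mp hftc1
  have hineq2 : K * (d - c) + ∫ t in Icc c d, h t ≤ d * K + H d - (c * K + H c) := by
    have hrhs : (0:ℝ) ≤ d * K + H d - (c * K + H c) := by linarith [hHdc.2]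
    exact (ENNReal.ofReal_le_ofReal_iff hrhs).mp hftc2
  have hHeq : ∫ t in Icc c d, h t = H d - H c := by linarith [hineq1, hineq2]
  -- endpoint values
  have hHd : H d = Φ b := by
    rw [hHdef]
    simp only
    rw [hGceq d ⟨hcd, le_rfl⟩, hGd]
  have hHc : H c = 0 := by
    rw [hHdef]
    simp only
    rw [hGceq c ⟨le_rfl, hcd⟩, hGc, hΦdef]
    exact intervalIntegral.integral_same
  have hΦb : Φ b = ∫ t in Icc a b, f t := by
    rw [hΦdef]
    simp only
    rw [intervalIntegral.integral_of_le hab, MeasureTheory.integral_Icc_eq_integral_Ioc]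
  refine ⟨⟨⟨Mf * Mg, hhbd⟩, hheq⟩, ?_⟩
  rw [riemannIntegral, riemannIntegral, if_pos hab, if_pos hcd, hhval, hHeq, hHd, hHc, hΦb,
    hfVal]
  ring

end Main


/-- **Terëkhina's theorem.** Let `f` be Riemann integrable on `[a, b]`, let `G` be
differentiable on `[c, d]` (one-sidedly at the endpoints) with Riemann integrable
derivative `G'`, `G([c, d]) ⊆ [a, b]`, `G c = a` and `G d = b`. Then `(f ∘ G) · G'` is
Riemann integrable on `[c, d]` and `∫_a^b f(x) dx = ∫_c^d f(G t) G'(t) dt`. -/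
theorem terekhina (a b c d : ℝ) (hab : a ≤ b) (hcd : c ≤ d) (f G G' : ℝ → ℝ)
    (hf : RiemannIntegrableOn f a b)
    (hG : ∀ t ∈ Set.Icc c d, HasDerivWithinAt G (G' t) (Set.Icc c d) t)
    (hG' : RiemannIntegrableOn G' c d)
    (hrange : G '' Set.Icc c d ⊆ Set.Icc a b)
    (hGc : G c = a) (hGd : G d = b) :
    RiemannIntegrableOn (fun t => f (G t) * G' t) c d ∧
      riemannIntegral f a b = riemannIntegral (fun t => f (G t) * G' t) c d :=
  terekhina_main a b c d hab hcd f G G' hf hG hG' hrange hGc hGd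

end
end
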